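/- arXiv:1907.12229 — 7 statements merged into one kernel-verified Lean document; each statement's English description precedes it below -/
import Mathlib

section
/- Let n ≥ 2, let P be an n×n irreducible column-stochastic matrix (nonnegative entries, each column summing to one), and let D = diag(d_1,…,d_n) be a diagonal matrix with all d_i > 0 that is not a scalar multiple of the identity matrix. For α ≥ 0 set M(α) = (1−α)·I + α·P. Then the function α ↦ s(M(α)·D), where s(A) denotes the spectral bound of A (the maximum of the real parts of the eigenvalues of A), is strictly decreasing on (0,∞). -/
open Matrix Filter Set Topology

/-- A square matrix is irreducible if it is not permutation-similar to a nontrivial block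
upper triangular matrix; equivalently, for every nonempty proper subset `S` of indices there
are `i ∈ S` and `j ∉ S` with `A i j ≠ 0`. -/
def IsIrreducibleMatrix {n : ℕ} (A : Matrix (Fin n) (Fin n) ℝ) : Prop :=
  ∀ S : Set (Fin n), S.Nonempty → S ≠ Set.univ → ∃ i ∈ S, ∃ j ∈ Sᶜ, A i j ≠ 0

/-- The spectral bound of a real square matrix: the maximum of the real parts of its
(complex) eigenvalues, i.e. of the roots of its characteristic polynomial over `ℂ`. -/
noncomputable def spectralBound {n : ℕ} (A : Matrix (Fin n) (Fin n) ℝ) : ℝ :=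
  sSup {x : ℝ | ∃ μ : ℂ, ((A.map Complex.ofReal).charpoly).IsRoot μ ∧ μ.re = x}

/-- The spectral radius of a real square matrix: the maximum modulus of its (complex)
eigenvalues, i.e. of the roots of its characteristic polynomial over `ℂ`. -/
noncomputable def specRad {n : ℕ} (A : Matrix (Fin n) (Fin n) ℝ) : ℝ :=
  sSup {x : ℝ | ∃ μ : ℂ, ((A.map Complex.ofReal).charpoly).IsRoot μ ∧ ‖μ‖ = x}

namespace Karlin

variable {n : ℕ}

lemma irr_transpose {A : Matrix (Fin n) (Fin n) ℝ} (h : IsIrreducibleMatrix A) :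
    IsIrreducibleMatrix Aᵀ := by
  intro S hS hSu
  have hSc : Sᶜ.Nonempty := Set.nonempty_compl.2 hSu
  have hScu : Sᶜ ≠ Set.univ := by
    intro h'
    obtain ⟨x, hx⟩ := hS
    have : x ∈ Sᶜ := h' ▸ Set.mem_univ x
    exact this hx
  obtain ⟨i, hi, j, hj, hij⟩ := h Sᶜ hSc hScu
  exact ⟨j, by simpa using hj, i, hi, by simpa [Matrix.transpose_apply] using hij⟩

lemma irr_of_pattern {A B : Matrix (Fin n) (Fin n) ℝ} (h : IsIrreducibleMatrix A)
    (hp : ∀ i j, i ≠ j → A i j ≠ 0 → B i j ≠ 0) : IsIrreducibleMatrix B := by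
  intro S hS hSu
  obtain ⟨i, hi, j, hj, hij⟩ := h S hS hSu
  have hne : i ≠ j := by
    intro h'
    subst h'
    exact hj hi
  exact ⟨i, hi, j, hj, hp i j hne hij⟩

lemma mulVec_apply' {α : Type*} [NonUnitalNonAssocSemiring α]
    (A : Matrix (Fin n) (Fin n) α) (x : Fin n → α) (i : Fin n) :
    A.mulVec x i = ∑ j, A i j * x j := by
  simp [Matrix.mulVec, dotProduct]

lemma vecMul_apply' (A : Matrix (Fin n) (Fin n) ℝ) (x : Fin n → ℝ) (j : Fin n) :
    A.vecMul x j = ∑ i, x i * A i j := by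
  simp [Matrix.vecMul, dotProduct]

lemma mulVec_nonneg {A : Matrix (Fin n) (Fin n) ℝ} {x : Fin n → ℝ}
    (hA : ∀ i j, 0 ≤ A i j) (hx : ∀ i, 0 ≤ x i) : ∀ i, 0 ≤ A.mulVec x i := by
  intro i
  rw [mulVec_apply']
  exact Finset.sum_nonneg fun j _ => mul_nonneg (hA i j) (hx j)

/-- every row of an irreducible matrix (n ≥ 2) has a nonzero off-diagonal entry -/
lemma irr_row {A : Matrix (Fin n) (Fin n) ℝ} (hn : 2 ≤ n) (h : IsIrreducibleMatrix A)
    (i : Fin n) : ∃ j, j ≠ i ∧ A i j ≠ 0 := by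
  have h1 : ({i} : Set (Fin n)).Nonempty := ⟨i, rfl⟩
  have h2 : ({i} : Set (Fin n)) ≠ Set.univ := by
    intro he
    have e0 : (⟨0, by omega⟩ : Fin n) ∈ ({i} : Set (Fin n)) := he ▸ Set.mem_univ _
    have e1 : (⟨1, by omega⟩ : Fin n) ∈ ({i} : Set (Fin n)) := he ▸ Set.mem_univ _
    rw [Set.mem_singleton_iff] at e0 e1
    rw [← e1] at e0
    exact absurd (congrArg Fin.val e0) (by simp)
  obtain ⟨i', hi', j, hj, hij⟩ := h {i} h1 h2
  rw [Set.mem_singleton_iff] at hi'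
  subst hi'
  exact ⟨j, by simpa [Set.mem_compl_iff] using hj, hij⟩

section Growth

variable {C : Matrix (Fin n) (Fin n) ℝ}

lemma step_pos (hC : ∀ i j, 0 ≤ C i j) {x : Fin n → ℝ} (hx : ∀ i, 0 ≤ x i) (i : Fin n)
    (hxi : 0 < x i) : 0 < ((1 + C).mulVec x) i := by
  have : (1 + C).mulVec x = x + C.mulVec x := by
    rw [Matrix.add_mulVec, Matrix.one_mulVec]
  rw [this]
  have := mulVec_nonneg hC hx i
  simpa using add_pos_of_pos_of_nonneg hxi this

lemma step_nonneg (hC : ∀ i j, 0 ≤ C i j) {x : Fin n → ℝ} (hx : ∀ i, 0 ≤ x i) (i : Fin n) :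
    0 ≤ ((1 + C).mulVec x) i := by
  have : (1 + C).mulVec x = x + C.mulVec x := by
    rw [Matrix.add_mulVec, Matrix.one_mulVec]
  rw [this]
  have := mulVec_nonneg hC hx i
  have := hx i
  simp only [Pi.add_apply]
  linarith

lemma step_new (hC : ∀ i j, 0 ≤ C i j) (hirr : IsIrreducibleMatrix C)
    {x : Fin n → ℝ} (hx : ∀ i, 0 ≤ x i) (hpos : ∃ i, 0 < x i) (hzero : ∃ i, x i = 0) :
    ∃ i, x i = 0 ∧ 0 < ((1 + C).mulVec x) i := by
  classical
  set S : Set (Fin n) := {i | 0 < x i} with hS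
  have hSc : Sᶜ.Nonempty := by
    obtain ⟨i, hi⟩ := hzero
    exact ⟨i, by simp [hS, hi]⟩
  have hScu : Sᶜ ≠ Set.univ := by
    intro h'
    obtain ⟨i, hi⟩ := hpos
    have : i ∈ Sᶜ := h' ▸ Set.mem_univ i
    exact this hi
  obtain ⟨i, hi, j, hj, hij⟩ := hirr Sᶜ hSc hScu
  have hxj : 0 < x j := by simpa [hS] using hj
  have hxi : x i = 0 := by
    have : ¬ 0 < x i := hi
    have := hx i
    linarith
  refine ⟨i, hxi, ?_⟩
  have h1 : (1 + C).mulVec x i = x i + C.mulVec x i := by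
    rw [Matrix.add_mulVec, Matrix.one_mulVec]; rfl
  rw [h1, hxi, zero_add, mulVec_apply']
  have hterm : 0 < C i j * x j :=
    mul_pos (lt_of_le_of_ne (hC i j) (Ne.symm hij)) hxj
  have : C i j * x j ≤ ∑ k, C i k * x k :=
    Finset.single_le_sum (f := fun k => C i k * x k)
      (fun k _ => mul_nonneg (hC i k) (hx k)) (Finset.mem_univ j)
  linarith

/-- supports of iterates: `(1+C)^(n-1) x` is strictly positive for `x ≥ 0`, `x ≠ 0`. -/
lemma pow_mulVec_pos (hn : 2 ≤ n) (hC : ∀ i j, 0 ≤ C i j) (hirr : IsIrreducibleMatrix C)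
    {x : Fin n → ℝ} (hx : ∀ i, 0 ≤ x i) (hx0 : x ≠ 0) (i : Fin n) :
    0 < (((1 + C) ^ (n - 1)).mulVec x) i := by
  classical
  set y : ℕ → Fin n → ℝ := fun k => (((1 + C) ^ k).mulVec x) with hy
  have hyrec : ∀ k, y (k + 1) = (1 + C).mulVec (y k) := by
    intro k
    rw [hy]
    simp only
    rw [pow_succ', Matrix.mulVec_mulVec]
  have hy0 : y 0 = x := by simp [hy]
  set T : ℕ → Finset (Fin n) := fun k => Finset.univ.filter (fun i => y k i ≠ 0) with hT
  have hynn : ∀ k, ∀ i, 0 ≤ y k i := by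
    intro k
    induction k with
    | zero => simpa [hy0] using hx
    | succ k ih => rw [hyrec]; exact step_nonneg hC ih
  have hcard : ∀ k, min n (k + 1) ≤ (T k).card := by
    intro k
    induction k with
    | zero =>
      have : (T 0).Nonempty := by
        obtain ⟨i, hi⟩ := Function.ne_iff.1 hx0
        refine ⟨i, ?_⟩
        simp only [hT, hy0, Finset.mem_filter, Finset.mem_univ, true_and]
        simpa using hi
      have := Finset.card_pos.2 this
      omega
    | succ k ih =>
      have hsub : T k ⊆ T (k + 1) := by
        intro i hi
        simp only [hT, Finset.mem_filter, Finset.mem_univ, true_and] at hi ⊢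
        have : 0 < y k i := lt_of_le_of_ne (hynn k i) (Ne.symm hi)
        have := step_pos hC (hynn k) i this
        rw [hyrec]
        exact ne_of_gt this
      by_cases hu : T k = Finset.univ
      · have h1 : (T (k+1)).card = n := by
          have : T (k + 1) = Finset.univ := Finset.univ_subset_iff.1 (hu ▸ hsub)
          simp [this]
        omega
      · -- T k ≠ univ : there is a zero coordinate of y k
        have hz : ∃ i, y k i = 0 := by
          by_contra h
          push_neg at h
          exact hu (Finset.eq_univ_iff_forall.2 (fun i => by
            simp only [hT, Finset.mem_filter, Finset.mem_univ, true_and]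
            exact h i))
        have hp : ∃ i, 0 < y k i := by
          have hne : (T k).Nonempty := by
            apply Finset.card_pos.1
            omega
          obtain ⟨i, hi⟩ := hne
          simp only [hT, Finset.mem_filter, Finset.mem_univ, true_and] at hi
          exact ⟨i, lt_of_le_of_ne (hynn k i) (Ne.symm hi)⟩
        obtain ⟨i, hiz, hip⟩ := step_new hC hirr (hynn k) hp hz
        have hi1 : i ∈ T (k + 1) := by
          simp only [hT, Finset.mem_filter, Finset.mem_univ, true_and]
          rw [hyrec]
          exact ne_of_gt hip
        have hi0 : i ∉ T k := by
          simp [hT, hiz]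
        have : (T k).card < (T (k+1)).card :=
          Finset.card_lt_card (Finset.ssubset_iff_of_subset hsub |>.2 ⟨i, hi1, hi0⟩)
        omega
  have hfin : n ≤ (T (n - 1)).card := by
    have h1 := hcard (n - 1)
    omega
  have : T (n - 1) = Finset.univ := by
    apply Finset.eq_univ_of_card
    have hle : (T (n-1)).card ≤ n := by
      have := Finset.card_le_univ (T (n-1))
      simpa using this
    simp only [Fintype.card_fin]
    omega
  have hi : i ∈ T (n - 1) := this ▸ Finset.mem_univ i
  simp only [hT, Finset.mem_filter, Finset.mem_univ, true_and] at hi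
  exact lt_of_le_of_ne (hynn (n-1) i) (Ne.symm hi)

end Growth

section Perron

lemma continuous_mulVec (A : Matrix (Fin n) (Fin n) ℝ) :
    Continuous fun x : Fin n → ℝ => A.mulVec x := by
  have : (fun x : Fin n → ℝ => A.mulVec x) = fun x i => ∑ j, A i j * x j := by
    ext x i; rw [mulVec_apply']
  rw [this]
  exact continuous_pi fun i =>
    continuous_finset_sum _ fun j _ => continuous_const.mul (continuous_apply j)

theorem perron_exists (hn : 2 ≤ n) {C : Matrix (Fin n) (Fin n) ℝ}
    (hC : ∀ i j, 0 ≤ C i j) (hirr : IsIrreducibleMatrix C) :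
    ∃ (r : ℝ) (v : Fin n → ℝ), 0 ≤ r ∧ (∀ i, 0 < v i) ∧ C.mulVec v = r • v := by
  classical
  have hnpos : 0 < n := by omega
  haveI : Nonempty (Fin n) := ⟨⟨0, hnpos⟩⟩
  set T : Matrix (Fin n) (Fin n) ℝ := (1 + C) ^ (n - 1) with hTdef
  have hT : ∀ {x : Fin n → ℝ}, (∀ i, 0 ≤ x i) → x ≠ 0 → ∀ i, 0 < T.mulVec x i :=
    fun {x} hx hx0 i => pow_mulVec_pos hn hC hirr hx hx0 i
  set Δ := stdSimplex ℝ (Fin n) with hΔ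
  have hΔne : Δ.Nonempty := by
    refine ⟨fun _ => (n : ℝ)⁻¹, fun i => by positivity, ?_⟩
    simp only [Finset.sum_const, Finset.card_univ, Fintype.card_fin, nsmul_eq_mul]
    field_simp
  set K := (fun x => T.mulVec x) '' Δ with hK
  have hKcomp : IsCompact K := (isCompact_stdSimplex _ _).image (continuous_mulVec T)
  have hKne : K.Nonempty := hΔne.image _
  have hKpos : ∀ y ∈ K, ∀ i, 0 < y i := by
    rintro y ⟨x, hx, rfl⟩ i
    have hx0 : x ≠ 0 := by
      intro h
      have h2 := hx.2
      rw [h] at h2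
      simp at h2
    exact hT hx.1 hx0 i
  set g : (Fin n → ℝ) → ℝ :=
    fun y => Finset.univ.inf' Finset.univ_nonempty (fun i => C.mulVec y i / y i) with hg
  have hgcont : ContinuousOn g K := by
    apply ContinuousOn.finset_inf'_apply
    intro i _
    apply ContinuousOn.div
    · exact ((continuous_apply i).comp (continuous_mulVec C)).continuousOn
    · exact (continuous_apply i).continuousOn
    · exact fun y hy => ne_of_gt (hKpos y hy i)
  obtain ⟨v, hvK, hvmax⟩ := hKcomp.exists_isMaxOn hKne hgcont
  have hvpos : ∀ i, 0 < v i := hKpos v hvK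
  set r := g v with hr
  have hr0 : 0 ≤ r := by
    apply Finset.le_inf'
    intro i _
    exact div_nonneg (mulVec_nonneg hC (fun j => (hvpos j).le) i) (hvpos i).le
  have hCv_ge : ∀ i, r * v i ≤ C.mulVec v i := by
    intro i
    have h1 : r ≤ C.mulVec v i / v i := Finset.inf'_le _ (Finset.mem_univ i)
    exact (le_div_iff₀ (hvpos i)).1 h1
  set z := C.mulVec v - r • v with hzdef
  have hznn : ∀ i, 0 ≤ z i := by
    intro i
    simp only [hzdef, Pi.sub_apply, Pi.smul_apply, smul_eq_mul]
    linarith [hCv_ge i]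
  by_cases hz0 : z = 0
  · refine ⟨r, v, hr0, hvpos, ?_⟩
    exact sub_eq_zero.1 hz0
  · exfalso
    have hTz : ∀ i, 0 < T.mulVec z i := hT hznn hz0
    have hcomm : T * C = C * T := by
      have h1 : Commute (1 + C) C := (Commute.one_left C).add_left (Commute.refl C)
      exact (h1.pow_left (n - 1))
    set v' := T.mulVec v with hv'
    have hv'pos : ∀ i, 0 < v' i := hT (fun i => (hvpos i).le)
      (by intro h; have := congrFun h ⟨0, hnpos⟩; exact absurd this (ne_of_gt (hvpos _))) 
    have hkey : ∀ i, r * v' i < C.mulVec v' i := by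
      intro i
      have h1 : T.mulVec z = C.mulVec v' - r • v' := by
        rw [hzdef, Matrix.mulVec_sub, Matrix.mulVec_smul, hv',
          Matrix.mulVec_mulVec, hcomm, ← Matrix.mulVec_mulVec]
      have h2 := hTz i
      rw [h1] at h2
      simp only [Pi.sub_apply, Pi.smul_apply, smul_eq_mul] at h2
      linarith
    set c := (∑ i, v i)⁻¹ with hc
    have hsum : 0 < ∑ i, v i := Finset.sum_pos (fun i _ => hvpos i) Finset.univ_nonempty
    have hcpos : 0 < c := inv_pos.2 hsum
    have hxΔ : c • v ∈ Δ := by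
      refine ⟨fun i => mul_nonneg hcpos.le (hvpos i).le, ?_⟩
      have hss : ∑ i, (c • v) i = c * ∑ i, v i := by
        rw [Finset.mul_sum]
        exact Finset.sum_congr rfl fun i _ => rfl
      rw [hss, hc]
      field_simp
    have hmem : c • v' ∈ K := by
      refine ⟨c • v, hxΔ, ?_⟩
      show T *ᵥ (c • v) = c • v'
      rw [Matrix.mulVec_smul]
    have hgval : r < g (c • v') := by
      refine (Finset.lt_inf'_iff _).2 fun i _ => ?_
      have : C.mulVec (c • v') i / (c • v') i = C.mulVec v' i / v' i := by
        rw [Matrix.mulVec_smul]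
        simp only [Pi.smul_apply, smul_eq_mul]
        rw [mul_div_mul_left _ _ (ne_of_gt hcpos)]
      rw [this]
      exact (lt_div_iff₀ (hv'pos i)).2 (by linarith [hkey i])
    have h2 : g (c • v') ≤ g v := hvmax hmem
    rw [← hr] at h2
    linarith

end Perron

section Spectral

lemma perron_exists_left (hn : 2 ≤ n) {C : Matrix (Fin n) (Fin n) ℝ}
    (hC : ∀ i j, 0 ≤ C i j) (hirr : IsIrreducibleMatrix C) :
    ∃ (r : ℝ) (u : Fin n → ℝ), 0 ≤ r ∧ (∀ i, 0 < u i) ∧ C.vecMul u = r • u := by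
  obtain ⟨r, u, h0, hpos, heq⟩ := perron_exists hn (C := Cᵀ)
    (fun i j => hC j i) (irr_transpose hirr)
  exact ⟨r, u, h0, hpos, by rwa [Matrix.mulVec_transpose] at heq⟩

lemma dot_pos {u v : Fin n → ℝ} (hn : 2 ≤ n) (hu : ∀ i, 0 < u i) (hv : ∀ i, 0 < v i) :
    0 < u ⬝ᵥ v := by
  haveI : Nonempty (Fin n) := ⟨⟨0, by omega⟩⟩
  exact Finset.sum_pos (fun i _ => mul_pos (hu i) (hv i)) Finset.univ_nonempty

lemma pairing (hn : 2 ≤ n) {A : Matrix (Fin n) (Fin n) ℝ} {u v : Fin n → ℝ} {ρ r : ℝ}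
    (hu : ∀ i, 0 < u i) (hv : ∀ i, 0 < v i)
    (huA : A.vecMul u = ρ • u) (hAv : A.mulVec v = r • v) : ρ = r := by
  have h1 : u ⬝ᵥ A.mulVec v = A.vecMul u ⬝ᵥ v := Matrix.dotProduct_mulVec u A v
  rw [hAv, huA, dotProduct_smul, smul_dotProduct] at h1
  have hpos : 0 < u ⬝ᵥ v := dot_pos hn hu hv
  have := h1
  simp only [smul_eq_mul] at this
  exact mul_right_cancel₀ (ne_of_gt hpos) (this.symm)

lemma isRoot_charpoly_iff {K : Type*} [Field K] (A : Matrix (Fin n) (Fin n) K) (x : K) :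
    A.charpoly.IsRoot x ↔ (x • (1 : Matrix (Fin n) (Fin n) K) - A).det = 0 := by
  classical
  rw [Matrix.charpoly, Polynomial.IsRoot]
  have h1 : Polynomial.eval x (Matrix.charmatrix A).det =
      ((Matrix.charmatrix A).map (Polynomial.evalRingHom x)).det := by
    have := RingHom.map_det (Polynomial.evalRingHom x) (Matrix.charmatrix A)
    rw [RingHom.mapMatrix_apply] at this
    exact this
  have h2 : (Matrix.charmatrix A).map (Polynomial.evalRingHom x) =
      x • (1 : Matrix (Fin n) (Fin n) K) - A := by
    ext i j
    by_cases h : i = j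
    · subst h
      simp [Matrix.charmatrix_apply_eq, Matrix.one_apply]
    · simp [Matrix.charmatrix_apply_ne _ _ _ h, Matrix.one_apply, h]
  rw [h1, h2]

lemma isRoot_ofReal {A : Matrix (Fin n) (Fin n) ℝ} {x : ℝ}
    (h : (x • (1 : Matrix (Fin n) (Fin n) ℝ) - A).det = 0) :
    ((A.map Complex.ofReal).charpoly).IsRoot (x : ℂ) := by
  rw [isRoot_charpoly_iff]
  have h2 : ((x • (1 : Matrix (Fin n) (Fin n) ℝ) - A).map Complex.ofRealHom) =
      (x : ℂ) • (1 : Matrix (Fin n) (Fin n) ℂ) - A.map Complex.ofReal := by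
    ext i j
    simp only [Matrix.map_apply, Matrix.sub_apply, Matrix.smul_apply, Matrix.one_apply,
      smul_eq_mul]
    by_cases hij : i = j <;> simp [hij]
  have h3 := RingHom.map_det Complex.ofRealHom (x • (1 : Matrix (Fin n) (Fin n) ℝ) - A)
  rw [RingHom.mapMatrix_apply] at h3
  rw [← h2, ← h3, h]
  simp

lemma charpoly_ne_zero (A : Matrix (Fin n) (Fin n) ℂ) : A.charpoly ≠ 0 :=
  (Matrix.charpoly_monic A).ne_zero

lemma spec_set_finite (A : Matrix (Fin n) (Fin n) ℝ) :
    {x : ℝ | ∃ μ : ℂ, ((A.map Complex.ofReal).charpoly).IsRoot μ ∧ μ.re = x}.Finite := by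
  have h1 : {x : ℝ | ∃ μ : ℂ, ((A.map Complex.ofReal).charpoly).IsRoot μ ∧ μ.re = x} =
      Complex.re '' {μ : ℂ | ((A.map Complex.ofReal).charpoly).IsRoot μ} := by
    ext x
    simp only [Set.mem_image, Set.mem_setOf_eq]
  rw [h1]
  exact (Polynomial.finite_setOf_isRoot (charpoly_ne_zero _)).image _

lemma spec_set_bddAbove (A : Matrix (Fin n) (Fin n) ℝ) :
    BddAbove {x : ℝ | ∃ μ : ℂ, ((A.map Complex.ofReal).charpoly).IsRoot μ ∧ μ.re = x} :=
  (spec_set_finite A).bddAbove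

lemma le_spectralBound {A : Matrix (Fin n) (Fin n) ℝ} {x : ℝ}
    (h : (x • (1 : Matrix (Fin n) (Fin n) ℝ) - A).det = 0) : x ≤ spectralBound A :=
  le_csSup (spec_set_bddAbove A) ⟨(x : ℂ), isRoot_ofReal h, by simp⟩

lemma det_eig_zero {A : Matrix (Fin n) (Fin n) ℝ} {r : ℝ} {v : Fin n → ℝ}
    (hv : v ≠ 0) (hAv : A.mulVec v = r • v) :
    (r • (1 : Matrix (Fin n) (Fin n) ℝ) - A).det = 0 := by
  rw [← Matrix.exists_mulVec_eq_zero_iff]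
  refine ⟨v, hv, ?_⟩
  rw [Matrix.sub_mulVec, Matrix.smul_mulVec, Matrix.one_mulVec, hAv, sub_self]

lemma root_abs_le (hn : 2 ≤ n) {C : Matrix (Fin n) (Fin n) ℝ} (hC : ∀ i j, 0 ≤ C i j)
    {u : Fin n → ℝ} {r : ℝ} (hu : ∀ i, 0 < u i) (huC : C.vecMul u = r • u) {μ : ℂ}
    (hμ : ((C.map Complex.ofReal).charpoly).IsRoot μ) : ‖μ‖ ≤ r := by
  classical
  rw [isRoot_charpoly_iff] at hμ
  obtain ⟨w, hw0, hww⟩ := (Matrix.exists_mulVec_eq_zero_iff).2 hμ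
  have heig : (C.map Complex.ofReal).mulVec w = μ • w := by
    rw [Matrix.sub_mulVec, Matrix.smul_mulVec, Matrix.one_mulVec, sub_eq_zero] at hww
    exact hww.symm
  set x : Fin n → ℝ := fun i => ‖w i‖ with hx
  have hxnn : ∀ i, 0 ≤ x i := fun i => norm_nonneg _
  have hineq : ∀ i, ‖μ‖ * x i ≤ C.mulVec x i := by
    intro i
    have h1 : μ * w i = ∑ j, (C i j : ℂ) * w j := by
      have := congrFun heig i
      rw [mulVec_apply'] at this
      simp only [Pi.smul_apply, smul_eq_mul] at this
      exact this.symm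
    have h2 : ‖μ * w i‖ ≤ ∑ j, C i j * x j := by
      rw [h1]
      refine le_trans (norm_sum_le _ _) (le_of_eq ?_)
      refine Finset.sum_congr rfl fun j _ => ?_
      rw [norm_mul, Complex.norm_real, Real.norm_eq_abs, abs_of_nonneg (hC i j)]
    rw [norm_mul] at h2
    rw [mulVec_apply']
    exact h2
  have hx0 : ∃ i, 0 < x i := by
    by_contra h
    push_neg at h
    apply hw0
    funext i
    have h2 : ‖w i‖ = 0 := le_antisymm (h i) (hxnn i)
    exact norm_eq_zero.1 h2
  have hpos : 0 < ∑ i, u i * x i := by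
    obtain ⟨i0, hi0⟩ := hx0
    refine Finset.sum_pos' (fun i _ => mul_nonneg (hu i).le (hxnn i)) ⟨i0, Finset.mem_univ _, mul_pos (hu i0) hi0⟩
  have hfin : ‖μ‖ * ∑ i, u i * x i ≤ r * ∑ i, u i * x i := by
    calc ‖μ‖ * ∑ i, u i * x i = ∑ i, u i * (‖μ‖ * x i) := by
          rw [Finset.mul_sum]; exact Finset.sum_congr rfl fun i _ => by ring
    _ ≤ ∑ i, u i * C.mulVec x i :=
          Finset.sum_le_sum fun i _ => mul_le_mul_of_nonneg_left (hineq i) (hu i).le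
    _ = (C.vecMul u) ⬝ᵥ x := by
          rw [← Matrix.dotProduct_mulVec]
          rfl
    _ = r * ∑ i, u i * x i := by
          rw [huC, smul_dotProduct]
          simp only [smul_eq_mul]
          rfl
  exact le_of_mul_le_mul_right hfin hpos

end Spectral

section Identification

lemma pos_ne_zero (hn : 2 ≤ n) {v : Fin n → ℝ} (hv : ∀ i, 0 < v i) : v ≠ 0 := by
  intro h
  have := hv ⟨0, by omega⟩
  rw [h] at this
  simp at this

lemma perron_spectral (hn : 2 ≤ n) {N : Matrix (Fin n) (Fin n) ℝ} (c : ℝ)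
    (hC : ∀ i j, 0 ≤ (N + c • (1 : Matrix (Fin n) (Fin n) ℝ)) i j)
    (hirr : IsIrreducibleMatrix (N + c • 1)) :
    ∃ (r : ℝ) (v u : Fin n → ℝ), (∀ i, 0 < v i) ∧ (∀ i, 0 < u i) ∧
      (N + c • 1).mulVec v = r • v ∧ (N + c • 1).vecMul u = r • u ∧
      spectralBound N = r - c := by
  obtain ⟨r, v, hr0, hv, hCv⟩ := perron_exists hn hC hirr
  obtain ⟨r', u, hr'0, hu, huC⟩ := perron_exists_left hn hC hirr
  have hrr : r' = r := pairing hn hu hv huC hCv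
  subst hrr
  refine ⟨r', v, u, hv, hu, hCv, huC, ?_⟩
  have hdet : ((r' - c) • (1 : Matrix (Fin n) (Fin n) ℝ) - N).det = 0 := by
    have hmat : (r' - c) • (1 : Matrix (Fin n) (Fin n) ℝ) - N =
        r' • (1 : Matrix (Fin n) (Fin n) ℝ) - (N + c • 1) := by
      rw [sub_smul]
      abel
    rw [hmat]
    exact det_eig_zero (pos_ne_zero hn hv) hCv
  apply le_antisymm
  · apply csSup_le
    · exact ⟨r' - c, ((r' - c : ℝ) : ℂ), isRoot_ofReal hdet, by simp⟩
    · rintro x ⟨μ, hroot, hre⟩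
      have hroot2 : (((N + c • 1).map Complex.ofReal).charpoly).IsRoot (μ + c) := by
        rw [isRoot_charpoly_iff] at hroot ⊢
        have hmat2 : (μ + c) • (1 : Matrix (Fin n) (Fin n) ℂ) - (N + c • 1).map Complex.ofReal
            = μ • 1 - N.map Complex.ofReal := by
          ext i j
          simp only [Matrix.map_apply, Matrix.sub_apply, Matrix.smul_apply, Matrix.add_apply,
            Matrix.one_apply, smul_eq_mul]
          by_cases h : i = j <;> simp [h] <;> push_cast <;> ring
        rw [hmat2]
        exact hroot
      have habs := root_abs_le hn hC hu huC hroot2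
      have hre2 : μ.re + c ≤ ‖μ + c‖ := by
        have h3 := Complex.re_le_norm (μ + c)
        simpa using h3
      rw [← hre]
      linarith
  · exact le_spectralBound hdet

lemma cw_lower (hn : 2 ≤ n) {N : Matrix (Fin n) (Fin n) ℝ} (c : ℝ)
    (hC : ∀ i j, 0 ≤ (N + c • (1 : Matrix (Fin n) (Fin n) ℝ)) i j)
    (hirr : IsIrreducibleMatrix (N + c • 1))
    {v : Fin n → ℝ} (hv : ∀ i, 0 < v i) {m : ℝ} (hm : ∀ i, m * v i ≤ N.mulVec v i) :
    m ≤ spectralBound N := by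
  obtain ⟨r, vP, u, hvP, hu, hCv, huC, hspec⟩ := perron_spectral hn c hC hirr
  rw [hspec]
  have h1 : ∀ i, (m + c) * v i ≤ (N + c • 1).mulVec v i := by
    intro i
    have := hm i
    rw [Matrix.add_mulVec, Matrix.smul_mulVec, Matrix.one_mulVec]
    simp only [Pi.add_apply, Pi.smul_apply, smul_eq_mul]
    linarith
  have h2 : (m + c) * (u ⬝ᵥ v) ≤ r * (u ⬝ᵥ v) := by
    calc (m + c) * (u ⬝ᵥ v) = ∑ i, u i * ((m + c) * v i) := by
          rw [dotProduct, Finset.mul_sum]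
          exact Finset.sum_congr rfl fun i _ => by ring
    _ ≤ ∑ i, u i * (N + c • 1).mulVec v i :=
          Finset.sum_le_sum fun i _ => mul_le_mul_of_nonneg_left (h1 i) (hu i).le
    _ = ((N + c • 1).vecMul u) ⬝ᵥ v := by rw [← Matrix.dotProduct_mulVec]; rfl
    _ = r * (u ⬝ᵥ v) := by rw [huC, smul_dotProduct]; simp
  have hpos := dot_pos hn hu hv
  have h3 : m + c ≤ r := le_of_mul_le_mul_right h2 hpos
  linarith

end Identification

section FK

lemma poisson (hn : 2 ≤ n) {S : Matrix (Fin n) (Fin n) ℝ}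
    (hS : ∀ i j, 0 ≤ S i j) (hirr : IsIrreducibleMatrix S)
    (hrow : ∀ i, ∑ j, S i j = 1)
    {w : Fin n → ℝ} (hw : ∀ i, 0 < w i) (hstat : ∀ j, ∑ i, w i * S i j = w j)
    {x : Fin n → ℝ} (hx : ∑ i, w i * x i = 0) :
    ∃ g : Fin n → ℝ, ∀ i, g i - S.mulVec g i = x i := by
  classical
  haveI : Nonempty (Fin n) := ⟨⟨0, by omega⟩⟩
  set onef : Fin n → ℝ := fun _ => 1 with honef
  set L : (Fin n → ℝ) →ₗ[ℝ] (Fin n → ℝ) := Matrix.mulVecLin (1 - S) with hL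
  have hLapp : ∀ g : Fin n → ℝ, L g = fun i => g i - S.mulVec g i := by
    intro g
    funext i
    rw [hL, Matrix.mulVecLin_apply, Matrix.sub_mulVec, Matrix.one_mulVec]
    rfl
  have hS1 : S.mulVec onef = onef := by
    funext i
    rw [mulVec_apply']
    simp [honef, hrow i]
  have h1ker : L onef = 0 := by
    rw [hLapp, hS1]
    funext i
    simp
  -- kernel is spanned by the constant vector
  have hker : ∀ z : Fin n → ℝ, L z = 0 → ∃ c : ℝ, z = fun _ => c := by
    intro z hz
    have hSz : S.mulVec z = z := by
      funext i
      have := congrFun (hLapp z) i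
      rw [hz] at this
      simp only [Pi.zero_apply] at this
      linarith [this.symm]
    obtain ⟨i0, -, hi0⟩ := Finset.exists_min_image Finset.univ z Finset.univ_nonempty
    set c := z i0 with hc
    set y : Fin n → ℝ := fun i => z i - c with hy
    have hynn : ∀ i, 0 ≤ y i := fun i => sub_nonneg.2 (hi0 i (Finset.mem_univ i))
    have hSy : S.mulVec y = y := by
      funext i
      rw [mulVec_apply']
      have : ∀ j, S i j * y j = S i j * z j - S i j * c := fun j => by rw [hy]; ring
      rw [Finset.sum_congr rfl fun j _ => this j, Finset.sum_sub_distrib,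
        ← Finset.sum_mul, hrow i]
      have h2 : ∑ j, S i j * z j = z i := by
        have := congrFun hSz i
        rw [mulVec_apply'] at this
        exact this
      rw [h2, hy]
      ring
    refine ⟨c, ?_⟩
    by_contra hzc
    have hy0 : ∃ i, 0 < y i := by
      by_contra h
      push_neg at h
      apply hzc
      funext i
      have : y i = 0 := le_antisymm (h i) (hynn i)
      rw [hy] at this
      simp only at this
      linarith
    have hTne : ({i | 0 < y i}ᶜ : Set (Fin n)).Nonempty := by
      refine ⟨i0, ?_⟩
      simp only [Set.mem_compl_iff, Set.mem_setOf_eq, not_lt]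
      rw [hy]
      simp [hc]
    have hTnu : ({i | 0 < y i}ᶜ : Set (Fin n)) ≠ Set.univ := by
      intro h
      obtain ⟨i, hi⟩ := hy0
      have : i ∈ ({i | 0 < y i}ᶜ : Set (Fin n)) := h ▸ Set.mem_univ i
      exact this hi
    obtain ⟨i, hi, j, hj, hij⟩ := hirr _ hTne hTnu
    have hyi : y i = 0 := by
      have hi' : ¬ 0 < y i := hi
      linarith [hynn i, not_lt.1 hi']
    have hyj : 0 < y j := by simpa using hj
    have : 0 < S.mulVec y i := by
      rw [mulVec_apply']
      have hterm : 0 < S i j * y j := mul_pos (lt_of_le_of_ne (hS i j) (Ne.symm hij)) hyj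
      have hle : S i j * y j ≤ ∑ k, S i k * y k :=
        Finset.single_le_sum (f := fun k => S i k * y k)
          (fun k _ => mul_nonneg (hS i k) (hynn k)) (Finset.mem_univ j)
      linarith
    rw [hSy] at this
    rw [hyi] at this
    exact lt_irrefl 0 this
  -- dimension count
  have hkereq : LinearMap.ker L = Submodule.span ℝ {onef} := by
    apply le_antisymm
    · intro z hz
      obtain ⟨c, hc⟩ := hker z (LinearMap.mem_ker.1 hz)
      rw [Submodule.mem_span_singleton]
      exact ⟨c, by rw [hc]; funext i; simp [honef]⟩
    · rw [Submodule.span_singleton_le_iff_mem]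
      exact LinearMap.mem_ker.2 h1ker
  have hone0 : onef ≠ 0 := by
    intro h
    have := congrFun h ⟨0, by omega⟩
    simp [honef] at this
  have hkerrank : Module.finrank ℝ (LinearMap.ker L) = 1 := by
    rw [hkereq]
    exact finrank_span_singleton hone0
  have hrank := LinearMap.finrank_range_add_finrank_ker L
  rw [hkerrank, Module.finrank_fintype_fun_eq_card, Fintype.card_fin] at hrank
  -- the functional φ
  set φ : (Fin n → ℝ) →ₗ[ℝ] ℝ :=
    { toFun := fun z => ∑ i, w i * z i
      map_add' := by
        intro a b
        simp only [Pi.add_apply]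
        rw [← Finset.sum_add_distrib]
        exact Finset.sum_congr rfl fun i _ => by ring
      map_smul' := by
        intro m a
        simp only [Pi.smul_apply, smul_eq_mul, RingHom.id_apply]
        rw [Finset.mul_sum]
        exact Finset.sum_congr rfl fun i _ => by ring } with hφ
  have hφsurj : Function.Surjective φ := by
    intro t
    have hsw : 0 < ∑ i, w i := Finset.sum_pos (fun i _ => hw i) Finset.univ_nonempty
    refine ⟨fun _ => t / (∑ i, w i), ?_⟩
    simp only [hφ, LinearMap.coe_mk, AddHom.coe_mk]
    rw [← Finset.sum_mul]
    field_simp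
  have hφrange : LinearMap.range φ = ⊤ := LinearMap.range_eq_top.2 hφsurj
  have hφrank := LinearMap.finrank_range_add_finrank_ker φ
  rw [hφrange, Module.finrank_fintype_fun_eq_card, Fintype.card_fin] at hφrank
  have hφtop : Module.finrank ℝ (⊤ : Submodule ℝ ℝ) = 1 := by
    rw [finrank_top]
    exact Module.finrank_self ℝ
  rw [hφtop] at hφrank
  -- range L ⊆ ker φ
  have hle : LinearMap.range L ≤ LinearMap.ker φ := by
    rintro z ⟨g, rfl⟩
    rw [LinearMap.mem_ker]
    have : φ (L g) = ∑ i, w i * (g i - S.mulVec g i) := by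
      rw [hLapp]
      rfl
    rw [this]
    have h1 : ∑ i, w i * (g i - S.mulVec g i) =
        (∑ i, w i * g i) - ∑ i, w i * S.mulVec g i := by
      rw [← Finset.sum_sub_distrib]
      exact Finset.sum_congr rfl fun i _ => by ring
    have h2 : ∑ i, w i * S.mulVec g i = ∑ j, w j * g j := by
      calc ∑ i, w i * S.mulVec g i = ∑ i, ∑ j, w i * S i j * g j := by
            refine Finset.sum_congr rfl fun i _ => ?_
            rw [mulVec_apply', Finset.mul_sum]
            exact Finset.sum_congr rfl fun j _ => by ring
      _ = ∑ j, ∑ i, w i * S i j * g j := Finset.sum_comm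
      _ = ∑ j, w j * g j := by
            refine Finset.sum_congr rfl fun j _ => ?_
            rw [← Finset.sum_mul, hstat j]
    rw [h1, h2]
    ring
  have heq : LinearMap.range L = LinearMap.ker φ := by
    apply Submodule.eq_of_le_of_finrank_eq hle
    omega
  have hxmem : x ∈ LinearMap.ker φ := by
    rw [LinearMap.mem_ker]
    exact hx
  rw [← heq] at hxmem
  obtain ⟨g, hg⟩ := hxmem
  refine ⟨g, fun i => ?_⟩
  have h6 := congrFun (hLapp g) i
  rw [← h6]
  exact congrFun hg i

end FK

section FKineq

lemma fk_ineq (hn : 2 ≤ n) {A : Matrix (Fin n) (Fin n) ℝ}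
    (hA : ∀ i j, 0 ≤ A i j) (hirr : IsIrreducibleMatrix A)
    {r : ℝ} (hr : 0 < r) {v u : Fin n → ℝ} (hv : ∀ i, 0 < v i) (hu : ∀ i, 0 < u i)
    (hAv : A.mulVec v = r • v) (huA : A.vecMul u = r • u)
    {E : Fin n → ℝ} (hE : ∀ i, 0 < E i)
    {u' : Fin n → ℝ} (hu' : ∀ i, 0 < u' i) {ρ : ℝ}
    (hu'A : (Matrix.of fun i j => E i * A i j).vecMul u' = ρ • u') :
    r * Real.exp ((∑ i, (u i * v i) * Real.log (E i)) / (∑ i, u i * v i)) ≤ ρ := by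
  classical
  haveI : Nonempty (Fin n) := ⟨⟨0, by omega⟩⟩
  set Z : ℝ := ∑ i, u i * v i with hZ
  have hZpos : 0 < Z := Finset.sum_pos (fun i _ => mul_pos (hu i) (hv i)) Finset.univ_nonempty
  set S : Matrix (Fin n) (Fin n) ℝ := Matrix.of fun i j => A i j * v j / (r * v i) with hSdef
  have hSapp : ∀ i j, S i j = A i j * v j / (r * v i) := fun i j => rfl
  have hSnn : ∀ i j, 0 ≤ S i j := fun i j =>
    div_nonneg (mul_nonneg (hA i j) (hv j).le) (mul_pos hr (hv i)).le
  have hAvi : ∀ i, ∑ j, A i j * v j = r * v i := by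
    intro i
    have := congrFun hAv i
    rw [mulVec_apply'] at this
    simpa using this
  have hrow : ∀ i, ∑ j, S i j = 1 := by
    intro i
    rw [Finset.sum_congr rfl fun j _ => hSapp i j, ← Finset.sum_div, hAvi i]
    exact div_self (ne_of_gt (mul_pos hr (hv i)))
  have huAj : ∀ j, ∑ i, u i * A i j = r * u j := by
    intro j
    have := congrFun huA j
    rw [vecMul_apply'] at this
    simpa using this
  have hirrS : IsIrreducibleMatrix S := by
    apply irr_of_pattern hirr
    intro i j _ hij
    rw [hSapp]
    apply div_ne_zero
    · exact mul_ne_zero hij (ne_of_gt (hv j))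
    · exact ne_of_gt (mul_pos hr (hv i))
  set w : Fin n → ℝ := fun i => u i * v i / Z with hwdef
  have hw : ∀ i, 0 < w i := fun i => div_pos (mul_pos (hu i) (hv i)) hZpos
  have hwsum : ∑ i, w i = 1 := by
    rw [hwdef, ← Finset.sum_div, ← hZ]
    exact div_self (ne_of_gt hZpos)
  have hstat : ∀ j, ∑ i, w i * S i j = w j := by
    intro j
    have hterm : ∀ i, w i * S i j = (v j / (Z * r)) * (u i * A i j) := by
      intro i
      rw [hwdef, hSapp]
      field_simp [ne_of_gt (hv i), ne_of_gt hZpos, ne_of_gt hr]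
    rw [Finset.sum_congr rfl fun i _ => hterm i, ← Finset.mul_sum]
    have h4 : ∑ i, u i * A i j = r * u j := huAj j
    rw [h4, hwdef]
    field_simp [ne_of_gt hZpos, ne_of_gt hr]
  set m : ℝ := ∑ i, w i * Real.log (E i) with hm
  set x : Fin n → ℝ := fun i => Real.log (E i) - m with hxdef
  have hx : ∑ i, w i * x i = 0 := by
    have : ∀ i, w i * x i = w i * Real.log (E i) - w i * m := fun i => by
      rw [hxdef]; ring
    rw [Finset.sum_congr rfl fun i _ => this i, Finset.sum_sub_distrib, ← hm,
      ← Finset.sum_mul, hwsum]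
    ring
  obtain ⟨g, hg⟩ := poisson hn hSnn hirrS hrow hw hstat hx
  set y : Fin n → ℝ := fun i => v i * Real.exp (g i) with hydef
  have hy : ∀ i, 0 < y i := fun i => mul_pos (hv i) (Real.exp_pos _)
  have hkey : ∀ i, (r * Real.exp m) * y i ≤ E i * ∑ j, A i j * y j := by
    intro i
    have hconv : Real.exp (∑ j, S i j * g j) ≤ ∑ j, S i j * Real.exp (g j) := by
      have := convexOn_exp.map_sum_le (t := Finset.univ) (w := fun j => S i j)
        (p := g) (fun j _ => hSnn i j) (hrow i) (fun j _ => Set.mem_univ _)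
      simpa [smul_eq_mul] using this
    have hSg : ∑ j, S i j * g j = g i - x i := by
      have := hg i
      rw [mulVec_apply'] at this
      linarith
    have hAy : ∑ j, A i j * y j = (r * v i) * ∑ j, S i j * Real.exp (g j) := by
      rw [Finset.mul_sum]
      refine Finset.sum_congr rfl fun j _ => ?_
      show A i j * (v j * Real.exp (g j)) = r * v i * (A i j * v j / (r * v i) * Real.exp (g j))
      field_simp [ne_of_gt hr, ne_of_gt (hv i)]
    have h1 : (r * v i) * Real.exp (∑ j, S i j * g j) ≤ ∑ j, A i j * y j := by
      rw [hAy]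
      exact mul_le_mul_of_nonneg_left hconv (mul_pos hr (hv i)).le
    have h2 : (r * v i) * Real.exp (g i - x i) = (r * Real.exp m / E i) * y i := by
      have hx_i : x i = Real.log (E i) - m := rfl
      have hy_i : y i = v i * Real.exp (g i) := rfl
      rw [hx_i, hy_i]
      have hrw : g i - (Real.log (E i) - m) = g i + m - Real.log (E i) := by ring
      rw [hrw, Real.exp_sub, Real.exp_add, Real.exp_log (hE i)]
      field_simp [ne_of_gt (hE i)]
    have h3 : (r * Real.exp m / E i) * y i ≤ ∑ j, A i j * y j := by
      rw [← h2, ← hSg]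
      exact h1
    have h5 := mul_le_mul_of_nonneg_left h3 (hE i).le
    have h6 : E i * ((r * Real.exp m / E i) * y i) = (r * Real.exp m) * y i := by
      field_simp [ne_of_gt (hE i)]
    linarith
  -- pair with u'
  set θ : ℝ := r * Real.exp m with hθ
  have hypos : 0 < ∑ i, u' i * y i :=
    Finset.sum_pos (fun i _ => mul_pos (hu' i) (hy i)) Finset.univ_nonempty
  have hpair : θ * ∑ i, u' i * y i ≤ ρ * ∑ i, u' i * y i := by
    calc θ * ∑ i, u' i * y i = ∑ i, u' i * (θ * y i) := by
          rw [Finset.mul_sum]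
          exact Finset.sum_congr rfl fun i _ => by ring
    _ ≤ ∑ i, u' i * (E i * ∑ j, A i j * y j) :=
          Finset.sum_le_sum fun i _ => mul_le_mul_of_nonneg_left (hkey i) (hu' i).le
    _ = u' ⬝ᵥ ((Matrix.of fun i j => E i * A i j).mulVec y) := by
          refine Finset.sum_congr rfl fun i _ => ?_
          rw [mulVec_apply']
          have : ∑ j, (Matrix.of fun i j => E i * A i j) i j * y j
              = E i * ∑ j, A i j * y j := by
            rw [Finset.mul_sum]
            exact Finset.sum_congr rfl fun j _ => by
              show E i * A i j * y j = E i * (A i j * y j)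
              ring
          rw [this]
    _ = ((Matrix.of fun i j => E i * A i j).vecMul u') ⬝ᵥ y :=
          Matrix.dotProduct_mulVec u' _ y
    _ = ρ * ∑ i, u' i * y i := by
          rw [hu'A, smul_dotProduct]
          simp only [smul_eq_mul]
          rfl
  have hθρ : θ ≤ ρ := le_of_mul_le_mul_right hpair hypos
  have hmeq : m = (∑ i, (u i * v i) * Real.log (E i)) / Z := by
    rw [hm, Finset.sum_div]
    refine Finset.sum_congr rfl fun i _ => ?_
    rw [hwdef]
    ring
  rw [← hmeq, ← hθ]
  exact hθρ

end FKineq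

section Scalar

lemma log_bernoulli {p z : ℝ} (hp : 1 < p) (hz : 0 < 1 + z) (hpz : 0 < 1 + p * z) :
    Real.log (1 + p * z) ≤ p * Real.log (1 + z) ∧
      (z ≠ 0 → Real.log (1 + p * z) < p * Real.log (1 + z)) := by
  have hber := one_add_mul_self_le_rpow_one_add (by linarith : (-1:ℝ) ≤ z) hp.le
  constructor
  · have h1 := Real.log_le_log hpz hber
    rwa [Real.log_rpow hz] at h1
  · intro hz0
    have h2 := one_add_mul_self_lt_rpow_one_add (by linarith : (-1:ℝ) ≤ z) hz0 hp
    have h3 := Real.log_lt_log hpz h2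
    rwa [Real.log_rpow hz] at h3

end Scalar

end Karlin

set_option maxHeartbeats 2000000 in
open Karlin in
/-- For an irreducible column-stochastic `P` and a positive diagonal `D` that is
not a scalar multiple of the identity, `α ↦ s(M(α)·D)` with `M(α) = (1-α)·I + α·P` is strictly
decreasing on `(0,∞)`. -/
theorem spectralBound_strictAntiOn {n : ℕ} (hn : 2 ≤ n)
    (P : Matrix (Fin n) (Fin n) ℝ)
    (hPnn : ∀ i j, 0 ≤ P i j)
    (hPcol : ∀ j, ∑ i, P i j = 1)
    (hPirr : IsIrreducibleMatrix P)
    (d : Fin n → ℝ) (hd : ∀ i, 0 < d i)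
    (hD : ¬ ∃ c : ℝ, Matrix.diagonal d = c • (1 : Matrix (Fin n) (Fin n) ℝ)) :
    StrictAntiOn
      (fun α : ℝ => spectralBound
        ((((1 - α) • (1 : Matrix (Fin n) (Fin n) ℝ)) + α • P) * Matrix.diagonal d))
      (Set.Ioi 0) := by
  classical
  haveI : Nonempty (Fin n) := ⟨⟨0, by omega⟩⟩
  intro a ha b hb hab
  simp only [Set.mem_Ioi] at ha hb
  set N : ℝ → Matrix (Fin n) (Fin n) ℝ :=
    fun α => (((1 - α) • (1 : Matrix (Fin n) (Fin n) ℝ)) + α • P) * Matrix.diagonal d with hN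
  show spectralBound (N b) < spectralBound (N a)
  -- basic entry formulas
  have hNentry : ∀ (α : ℝ) i j, (N α) i j
      = ((1 - α) * (if i = j then (1:ℝ) else 0) + α * P i j) * d j := by
    intro α i j
    rw [hN]
    simp only
    have hentry : ((1 - α) • (1 : Matrix (Fin n) (Fin n) ℝ) + α • P) i j
        = (1 - α) * (if i = j then (1:ℝ) else 0) + α * P i j := by
      simp [Matrix.add_apply, Matrix.smul_apply, Matrix.one_apply, smul_eq_mul]
    rw [Matrix.mul_diagonal, hentry]
  have hNmul : ∀ (α : ℝ) (v : Fin n → ℝ) (i : Fin n), (N α).mulVec v i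
      = (1 - α) * (d i * v i) + α * ∑ j, P i j * (d j * v j) := by
    intro α v i
    rw [mulVec_apply']
    have h1 : ∀ j, (N α) i j * v j
        = (1 - α) * (if i = j then d j * v j else 0) + α * (P i j * (d j * v j)) := by
      intro j
      rw [hNentry]
      by_cases h : i = j <;> simp [h] <;> ring
    rw [Finset.sum_congr rfl fun j _ => h1 j, Finset.sum_add_distrib, ← Finset.mul_sum,
      ← Finset.mul_sum, Finset.sum_ite_eq]
    simp
  -- dmax and the shift constant
  set dmax : ℝ := Finset.univ.sup' Finset.univ_nonempty d with hdmaxdef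
  have hdmax : ∀ i, d i ≤ dmax := fun i => Finset.le_sup' d (Finset.mem_univ i)
  have hdmaxpos : 0 < dmax := lt_of_lt_of_le (hd ⟨0, by omega⟩) (hdmax _)
  have hnonneg : ∀ (α : ℝ), 0 < α → ∀ i j,
      0 ≤ (N α + ((1 + α) * dmax) • (1 : Matrix (Fin n) (Fin n) ℝ)) i j := by
    intro α hα i j
    rw [Matrix.add_apply, Matrix.smul_apply, hNentry]
    rcases eq_or_ne i j with h | h
    · subst h
      rw [Matrix.one_apply_eq, if_pos rfl]
      simp only [smul_eq_mul, mul_one]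
      have h1 : 0 ≤ α * P i i * d i := mul_nonneg (mul_nonneg hα.le (hPnn i i)) (hd i).le
      have h2 : 0 ≤ (1 - α) * d i + (1 + α) * dmax := by
        rcases le_or_gt α 1 with h3 | h3
        · have h4 : 0 ≤ (1 - α) * d i := mul_nonneg (by linarith) (hd i).le
          nlinarith
        · nlinarith [mul_nonneg (by linarith : (0:ℝ) ≤ α - 1)
            (by linarith [hdmax i] : (0:ℝ) ≤ dmax - d i)]
      nlinarith
    · rw [Matrix.one_apply_ne h, if_neg h]
      simp only [smul_eq_mul, mul_zero, add_zero, zero_add, zero_mul]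
      exact mul_nonneg (mul_nonneg hα.le (hPnn i j)) (hd j).le
  have hirrN : ∀ (α : ℝ), 0 < α →
      IsIrreducibleMatrix (N α + ((1 + α) * dmax) • (1 : Matrix (Fin n) (Fin n) ℝ)) := by
    intro α hα
    apply irr_of_pattern hPirr
    intro i j hne hij
    rw [Matrix.add_apply, Matrix.smul_apply, hNentry, Matrix.one_apply_ne hne, if_neg hne]
    simp only [smul_eq_mul, mul_zero, add_zero, zero_add]
    have h1 : 0 < P i j := lt_of_le_of_ne (hPnn i j) (Ne.symm hij)
    have h2 : 0 < α * P i j * d j := mul_pos (mul_pos hα h1) (hd j)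
    linarith
  -- Perron data for N α
  have key : ∀ (α : ℝ), 0 < α → ∃ (lam : ℝ) (v : Fin n → ℝ), (∀ i, 0 < v i) ∧
      (N α).mulVec v = lam • v ∧ spectralBound (N α) = lam := by
    intro α hα
    obtain ⟨r, v, u, hv, hu, hCv, huC, hspec⟩ :=
      perron_spectral hn ((1 + α) * dmax) (hnonneg α hα) (hirrN α hα)
    refine ⟨r - (1 + α) * dmax, v, hv, ?_, hspec⟩
    have h1 : (N α).mulVec v
        = (N α + ((1 + α) * dmax) • (1 : Matrix (Fin n) (Fin n) ℝ)).mulVec v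
          - ((1 + α) * dmax) • v := by
      rw [Matrix.add_mulVec, Matrix.smul_mulVec, Matrix.one_mulVec]
      abel
    rw [h1, hCv, ← sub_smul]
  obtain ⟨lam, vb, hvb, hNvb, hsb⟩ := key b hb
  obtain ⟨lama, va, hva, hNva, hsa⟩ := key a ha
  -- positive image sums
  have hPsum_pos : ∀ (v : Fin n → ℝ), (∀ i, 0 < v i) → ∀ i,
      0 < ∑ j, P i j * (d j * v j) := by
    intro v hv i
    obtain ⟨j0, hj0ne, hj0⟩ := irr_row hn hPirr i
    refine Finset.sum_pos' (fun j _ => mul_nonneg (hPnn i j) (mul_pos (hd j) (hv j)).le)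
      ⟨j0, Finset.mem_univ _, ?_⟩
    exact mul_pos (lt_of_le_of_ne (hPnn i j0) (Ne.symm hj0)) (mul_pos (hd j0) (hv j0))
  have claimA : ∀ i, (1 - a) * d i < lama := by
    intro i
    have h := congrFun hNva i
    rw [hNmul] at h
    simp only [Pi.smul_apply, smul_eq_mul] at h
    have hsum := hPsum_pos va hva i
    nlinarith [hva i]
  rw [hsb, hsa]
  by_cases hcase : ∃ i, lam ≤ (1 - a) * d i
  · obtain ⟨i, hi⟩ := hcase
    have := claimA i
    linarith
  push_neg at hcase
  -- MAIN CASE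
  have hSb : ∀ i, b * (∑ j, P i j * (d j * vb j)) = (lam - (1 - b) * d i) * vb i := by
    intro i
    have h := congrFun hNvb i
    rw [hNmul] at h
    simp only [Pi.smul_apply, smul_eq_mul] at h
    linear_combination h
  have hlam_b : ∀ i, 0 < lam - (1 - b) * d i := by
    intro i
    have h1 := hPsum_pos vb hvb i
    have h3 : 0 < (lam - (1 - b) * d i) * vb i := by
      rw [← hSb i]
      exact mul_pos hb h1
    rcases mul_pos_iff.1 h3 with ⟨h4, _⟩ | ⟨_, h5⟩
    · exact h4
    · exact absurd (hvb i) (not_lt.2 h5.le)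
  have hlam_a : ∀ i, 0 < lam - (1 - a) * d i := fun i => by linarith [hcase i]
  set Ka : Fin n → ℝ := fun i => a * d i / (lam - (1 - a) * d i) with hKadef
  set Kb : Fin n → ℝ := fun i => b * d i / (lam - (1 - b) * d i) with hKbdef
  have hKapos : ∀ i, 0 < Ka i := fun i => div_pos (mul_pos ha (hd i)) (hlam_a i)
  have hKbpos : ∀ i, 0 < Kb i := fun i => div_pos (mul_pos hb (hd i)) (hlam_b i)
  set y : Fin n → ℝ := fun i => d i * vb i with hydef
  have hyp : ∀ i, 0 < y i := fun i => mul_pos (hd i) (hvb i)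
  set Gb : Matrix (Fin n) (Fin n) ℝ := Matrix.of (fun i j => Kb i * P i j) with hGbdef
  set Ga : Matrix (Fin n) (Fin n) ℝ := Matrix.of (fun i j => Ka i * P i j) with hGadef
  have hGbnn : ∀ i j, 0 ≤ Gb i j := fun i j => mul_nonneg (hKbpos i).le (hPnn i j)
  have hGann : ∀ i j, 0 ≤ Ga i j := fun i j => mul_nonneg (hKapos i).le (hPnn i j)
  have hGbirr : IsIrreducibleMatrix Gb :=
    irr_of_pattern hPirr (fun i j _ hij => mul_ne_zero (ne_of_gt (hKbpos i)) hij)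
  have hGairr : IsIrreducibleMatrix Ga :=
    irr_of_pattern hPirr (fun i j _ hij => mul_ne_zero (ne_of_gt (hKapos i)) hij)
  -- y is a right Perron vector of Gb with eigenvalue 1
  have hGby : Gb.mulVec y = (1:ℝ) • y := by
    funext i
    rw [mulVec_apply']
    have h1 : ∑ j, Gb i j * y j = Kb i * ∑ j, P i j * y j := by
      rw [Finset.mul_sum]
      exact Finset.sum_congr rfl fun j _ => by
        show Kb i * P i j * y j = Kb i * (P i j * y j)
        ring
    rw [h1]
    have h2 := hSb i
    simp only [Pi.smul_apply, smul_eq_mul, one_mul]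
    show (b * d i / (lam - (1 - b) * d i)) * ∑ j, P i j * y j = y i
    rw [div_mul_eq_mul_div, div_eq_iff (ne_of_gt (hlam_b i))]
    show b * d i * ∑ j, P i j * y j = d i * vb i * (lam - (1 - b) * d i)
    linear_combination (d i) * h2
  -- left Perron vector of Gb
  obtain ⟨ρb, ub, hρb0, hub, hubGb⟩ := perron_exists_left hn hGbnn hGbirr
  have hρb1 : ρb = 1 := pairing hn hub hyp hubGb hGby
  rw [hρb1] at hubGb
  have hZbpos : 0 < ∑ i, ub i * y i :=
    Finset.sum_pos (fun i _ => mul_pos (hub i) (hyp i)) Finset.univ_nonempty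
  -- FK application 1 : ∑ w log Kb ≥ 0
  have hSBnn : 0 ≤ ∑ i, (ub i * y i) * Real.log (Kb i) := by
    set E1 : Fin n → ℝ := fun i => (Kb i)⁻¹ with hE1def
    have hE1pos : ∀ i, 0 < E1 i := fun i => inv_pos.2 (hKbpos i)
    have hEG1 : (Matrix.of fun i j => E1 i * Gb i j) = P := by
      ext i j
      show (Kb i)⁻¹ * (Kb i * P i j) = P i j
      rw [← mul_assoc, inv_mul_cancel₀ (ne_of_gt (hKbpos i)), one_mul]
    have hones : (Matrix.of fun i j => E1 i * Gb i j).vecMul (fun _ => (1:ℝ))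
        = (1:ℝ) • (fun _ => (1:ℝ)) := by
      rw [hEG1]
      funext j
      rw [vecMul_apply']
      simp only [one_mul, Pi.smul_apply, smul_eq_mul, mul_one]
      exact hPcol j
    have hFK1 := fk_ineq hn hGbnn hGbirr one_pos hyp hub hGby hubGb hE1pos
      (fun _ => one_pos) hones
    rw [one_mul] at hFK1
    have h1 : (∑ i, (ub i * y i) * Real.log (E1 i)) / (∑ i, ub i * y i) ≤ 0 :=
      Real.exp_le_exp.1 (by rwa [Real.exp_zero])
    have h2 : ∑ i, (ub i * y i) * Real.log (E1 i)
        = - ∑ i, (ub i * y i) * Real.log (Kb i) := by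
      rw [← Finset.sum_neg_distrib]
      refine Finset.sum_congr rfl fun i _ => ?_
      show (ub i * y i) * Real.log ((Kb i)⁻¹) = -((ub i * y i) * Real.log (Kb i))
      rw [Real.log_inv]
      ring
    rw [h2, div_le_iff₀ hZbpos, zero_mul, neg_nonpos] at h1
    exact h1
  -- scalar Bernoulli comparison
  have hba : 1 < b / a := (one_lt_div ha).2 hab
  have hscal : ∀ i, (b/a) * Real.log (Kb i) ≤ Real.log (Ka i) ∧
      (d i ≠ lam → (b/a) * Real.log (Kb i) < Real.log (Ka i)) := by
    intro i
    set z : ℝ := (lam - d i) / (d i * b) with hzdef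
    have hz1 : 1 + z = (lam - (1 - b) * d i) / (b * d i) := by
      rw [hzdef]
      field_simp [ne_of_gt (hd i), ne_of_gt hb]
      ring
    have hpz : 1 + (b/a) * z = (lam - (1 - a) * d i) / (a * d i) := by
      rw [hzdef]
      field_simp [ne_of_gt (hd i), ne_of_gt hb, ne_of_gt ha]
      ring
    have hz1pos : 0 < 1 + z := by
      rw [hz1]; exact div_pos (hlam_b i) (mul_pos hb (hd i))
    have hpzpos : 0 < 1 + (b/a) * z := by
      rw [hpz]; exact div_pos (hlam_a i) (mul_pos ha (hd i))
    have hKbz : Kb i = (1 + z)⁻¹ := by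
      rw [hz1, inv_div]
    have hKaz : Ka i = (1 + (b/a) * z)⁻¹ := by
      rw [hpz, inv_div]
    obtain ⟨hle, hlt⟩ := log_bernoulli hba hz1pos hpzpos
    rw [hKbz, hKaz, Real.log_inv, Real.log_inv]
    constructor
    · nlinarith [hle]
    · intro hdl
      have hz0 : z ≠ 0 := by
        rw [hzdef]
        exact div_ne_zero (sub_ne_zero.2 (Ne.symm hdl)) (ne_of_gt (mul_pos (hd i) hb))
      nlinarith [hlt hz0]
  have hex : ∃ i0, d i0 ≠ lam := by
    by_contra h
    push_neg at h
    refine hD ⟨lam, ?_⟩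
    ext i j
    rw [Matrix.diagonal_apply, Matrix.smul_apply, Matrix.one_apply]
    by_cases hij : i = j
    · simp [hij, h j]
    · simp [hij]
  obtain ⟨i0, hi0⟩ := hex
  -- strict sum comparison
  have hsum_lt : (b/a) * ∑ i, (ub i * y i) * Real.log (Kb i)
      < ∑ i, (ub i * y i) * Real.log (Ka i) := by
    calc (b/a) * ∑ i, (ub i * y i) * Real.log (Kb i)
        = ∑ i, (ub i * y i) * ((b/a) * Real.log (Kb i)) := by
          rw [Finset.mul_sum]
          exact Finset.sum_congr rfl fun i _ => by ring
    _ < ∑ i, (ub i * y i) * Real.log (Ka i) := by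
          refine Finset.sum_lt_sum
            (fun i _ => mul_le_mul_of_nonneg_left (hscal i).1 (mul_pos (hub i) (hyp i)).le)
            ⟨i0, Finset.mem_univ _,
              mul_lt_mul_of_pos_left ((hscal i0).2 hi0) (mul_pos (hub i0) (hyp i0))⟩
  have hSAB : 0 < (∑ i, (ub i * y i) * Real.log (Ka i))
      - ∑ i, (ub i * y i) * Real.log (Kb i) := by
    nlinarith [hSBnn, hba, hsum_lt]
  -- FK application 2 : the Perron root of Ga exceeds 1
  obtain ⟨ρ', u', hρ'0, hu', hu'Ga⟩ := perron_exists_left hn hGann hGairr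
  have hρ'1 : 1 < ρ' := by
    set E2 : Fin n → ℝ := fun i => Ka i * (Kb i)⁻¹ with hE2def
    have hE2pos : ∀ i, 0 < E2 i := fun i => mul_pos (hKapos i) (inv_pos.2 (hKbpos i))
    have hEG2 : (Matrix.of fun i j => E2 i * Gb i j) = Ga := by
      ext i j
      show Ka i * (Kb i)⁻¹ * (Kb i * P i j) = Ka i * P i j
      rw [mul_assoc (Ka i), ← mul_assoc ((Kb i)⁻¹), inv_mul_cancel₀ (ne_of_gt (hKbpos i)),
        one_mul]
    have hu'E : (Matrix.of fun i j => E2 i * Gb i j).vecMul u' = ρ' • u' := by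
      rw [hEG2]; exact hu'Ga
    have hFK2 := fk_ineq hn hGbnn hGbirr one_pos hyp hub hGby hubGb hE2pos hu' hu'E
    rw [one_mul] at hFK2
    have hlogE2 : ∑ i, (ub i * y i) * Real.log (E2 i)
        = (∑ i, (ub i * y i) * Real.log (Ka i)) - ∑ i, (ub i * y i) * Real.log (Kb i) := by
      rw [← Finset.sum_sub_distrib]
      refine Finset.sum_congr rfl fun i _ => ?_
      show (ub i * y i) * Real.log (Ka i * (Kb i)⁻¹) = _
      rw [Real.log_mul (ne_of_gt (hKapos i)) (ne_of_gt (inv_pos.2 (hKbpos i))), Real.log_inv]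
      ring
    rw [hlogE2] at hFK2
    have h3 : (1:ℝ) < Real.exp (((∑ i, (ub i * y i) * Real.log (Ka i))
        - ∑ i, (ub i * y i) * Real.log (Kb i)) / (∑ i, ub i * y i)) := by
      rw [← Real.exp_zero]
      exact Real.exp_lt_exp.2 (div_pos hSAB hZbpos)
    linarith
  -- right Perron vector of Ga
  obtain ⟨ρa, ya, hρa0, hya, hGaya⟩ := perron_exists hn hGann hGairr
  have hρeq : ρ' = ρa := pairing hn hu' hya hu'Ga hGaya
  rw [hρeq] at hρ'1
  -- transfer back to N a
  set v' : Fin n → ℝ := fun i => ya i / d i with hv'def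
  have hv' : ∀ i, 0 < v' i := fun i => div_pos (hya i) (hd i)
  set mmin : ℝ := Finset.univ.inf' Finset.univ_nonempty (fun i => lam - (1 - a) * d i)
    with hmmdef
  have hmmin_le : ∀ i, mmin ≤ lam - (1 - a) * d i :=
    fun i => Finset.inf'_le _ (Finset.mem_univ i)
  have hmmin_pos : 0 < mmin := (Finset.lt_inf'_iff _).2 (fun i _ => hlam_a i)
  have hfin : ∀ i, (lam + (ρa - 1) * mmin) * v' i ≤ (N a).mulVec v' i := by
    intro i
    rw [hNmul]
    have h2 : ∀ j, d j * v' j = ya j := fun j => by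
      show d j * (ya j / d j) = ya j
      rw [mul_comm, div_mul_cancel₀ _ (ne_of_gt (hd j))]
    rw [Finset.sum_congr rfl (fun j _ => by rw [h2 j])]
    have h := congrFun hGaya i
    rw [mulVec_apply'] at h
    simp only [Pi.smul_apply, smul_eq_mul] at h
    have h1 : ∑ j, Ga i j * ya j = Ka i * ∑ j, P i j * ya j := by
      rw [Finset.mul_sum]
      exact Finset.sum_congr rfl fun j _ => by
        show Ka i * P i j * ya j = Ka i * (P i j * ya j)
        ring
    rw [h1] at h
    -- h : Ka i * ∑ j, P i j * ya j = ρa * ya i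
    have hS : ∑ j, P i j * ya j = ρa * ya i * (lam - (1 - a) * d i) / (a * d i) := by
      rw [eq_div_iff (ne_of_gt (mul_pos ha (hd i)))]
      have h' : a * d i / (lam - (1 - a) * d i) * ∑ j, P i j * ya j = ρa * ya i := h
      rw [div_mul_eq_mul_div, div_eq_iff (ne_of_gt (hlam_a i))] at h'
      linear_combination h'
    rw [hS]
    have hcore : (lam + (ρa - 1) * mmin) * ya i
        ≤ (1 - a) * (d i * ya i) + ρa * (lam - (1 - a) * d i) * ya i := by
      nlinarith [mul_nonneg (mul_nonneg (by linarith : (0:ℝ) ≤ ρa - 1)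
        (by linarith [hmmin_le i] : (0:ℝ) ≤ (lam - (1 - a) * d i) - mmin)) (hya i).le]
    have hlhs : (lam + (ρa - 1) * mmin) * v' i
        = ((lam + (ρa - 1) * mmin) * ya i) / d i := by
      show (lam + (ρa - 1) * mmin) * (ya i / d i) = _
      ring
    have hrhs : (1 - a) * (d i * v' i) + a * (ρa * ya i * (lam - (1 - a) * d i) / (a * d i))
        = ((1 - a) * (d i * ya i) + ρa * (lam - (1 - a) * d i) * ya i) / d i := by
      show (1 - a) * (d i * (ya i / d i)) + a * (ρa * ya i * (lam - (1 - a) * d i) / (a * d i))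
          = _
      field_simp [ne_of_gt (hd i), ne_of_gt ha]
    rw [hlhs, hrhs]
    exact (div_le_div_iff_of_pos_right (hd i)).2 hcore
  have hcw := cw_lower hn ((1 + a) * dmax) (hnonneg a ha) (hirrN a ha) hv' hfin
  rw [hsa] at hcw
  nlinarith [hmmin_pos, hρ'1, hcw]
end

section
/- Let n ≥ 2 and let L be an n×n real matrix with all column sums equal to zero. Let C_{ij} denote the (i,j) cofactor of L, i.e., C_{ij} = (−1)^{i+j} times the determinant of the matrix obtained from L by deleting its i-th row and j-th column. Then C_{ij} = C_{jj} for all 1 ≤ i, j ≤ n. -/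
open Matrix Filter Set Topology

/-- The `(i,j)` cofactor of a square matrix: `(-1)^(i+j)` times the determinant of the
matrix obtained by deleting row `i` and column `j`. -/
noncomputable def cofactor {n : ℕ} (A : Matrix (Fin (n+1)) (Fin (n+1)) ℝ) (i j : Fin (n+1)) : ℝ :=
  (-1 : ℝ) ^ ((i : ℕ) + (j : ℕ)) * (A.submatrix i.succAbove j.succAbove).det

-- additivity of det in a row, over a sum
private lemma det_updateRow_finset_sum {m : ℕ} (A : Matrix (Fin m) (Fin m) ℝ) (j : Fin m)
    (s : Finset (Fin m)) (f : Fin m → (Fin m → ℝ)) :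
    (A.updateRow j (∑ k ∈ s, f k)).det = ∑ k ∈ s, (A.updateRow j (f k)).det := by
  induction s using Finset.induction_on with
  | empty => exact Matrix.det_eq_zero_of_row_eq_zero j (by simp)
  | @insert a s hk ih => simp [Finset.sum_insert hk, det_updateRow_add, ih]

private lemma key_updateRow_det {m : ℕ} (L : Matrix (Fin m) (Fin m) ℝ)
    (hrow : ∑ k, L k = 0) (i j : Fin m) (v : Fin m → ℝ) :
    (L.updateRow i v).det = (L.updateRow j v).det := by
  rcases eq_or_ne i j with rfl | hij
  · rfl
  · set A := L.updateRow i v with hA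
    have hAj : A j = L j := by simp [hA, updateRow_ne (Ne.symm hij)]
    have hLj : L j = (∑ k ∈ ({i, j} : Finset (Fin m))ᶜ, (-1 : ℝ) • L k) + (-1 : ℝ) • L i := by
      have : ∑ k ∈ ({i,j} : Finset (Fin m))ᶜ, L k + (L i + L j) = 0 := by
        rw [← Finset.sum_pair (f := fun k => L k) hij, Finset.sum_compl_add_sum (f := fun k => L k)]
        exact hrow
      funext c
      have h2 := congrFun this c
      have h4 := Finset.sum_apply c ({i, j} : Finset (Fin m))ᶜ (fun k => L k)
      have h5 := Finset.sum_apply c ({i, j} : Finset (Fin m))ᶜ (fun k => (-1 : ℝ) • L k)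
      simp only [Finset.sum_apply, Pi.add_apply, Pi.zero_apply, Pi.smul_apply, smul_eq_mul,
        neg_one_mul] at h2 h4 h5 ⊢
      have h3 : ∑ x ∈ ({i, j} : Finset (Fin m))ᶜ, -L x c
          = -∑ x ∈ ({i, j} : Finset (Fin m))ᶜ, L x c := by
        rw [Finset.sum_neg_distrib]
      linarith
    calc (L.updateRow i v).det = (A.updateRow j (L j)).det := by rw [← hAj, updateRow_eq_self]
      _ = ∑ k ∈ ({i, j} : Finset (Fin m))ᶜ, (A.updateRow j ((-1:ℝ) • L k)).det
            + (A.updateRow j ((-1:ℝ) • L i)).det := by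
          rw [hLj, det_updateRow_add, det_updateRow_finset_sum]
      _ = - (A.updateRow j (L i)).det := by
          have hz : ∀ k ∈ ({i, j} : Finset (Fin m))ᶜ, (A.updateRow j ((-1:ℝ) • L k)).det = 0 := by
            intro k hk
            simp only [Finset.mem_compl, Finset.mem_insert, Finset.mem_singleton, not_or] at hk
            rw [det_updateRow_smul]
            have hAk : A k = L k := updateRow_ne hk.1
            rw [← hAk, det_updateRow_eq_zero hk.2, mul_zero]
          rw [Finset.sum_eq_zero hz, zero_add, det_updateRow_smul]
          ring
      _ = (L.updateRow j v).det := by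
          have hswap : A.updateRow j (L i) = (L.updateRow j v).submatrix (Equiv.swap i j) id := by
            ext r c
            rcases eq_or_ne r j with rfl | hrj
            · simp [hA, Equiv.swap_apply_right, updateRow_ne hij]
            rcases eq_or_ne r i with rfl | hri
            · simp [hA, updateRow_ne hrj, Equiv.swap_apply_left, hij]
            · simp [hA, updateRow_ne hrj, updateRow_ne hri, Equiv.swap_apply_of_ne_of_ne hri hrj,
                updateRow_ne hrj]
          rw [hswap, det_permute, Equiv.Perm.sign_swap hij]
          push_cast
          ring

/-- For a square matrix with zero column sums, any cofactor in a column equals the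
diagonal cofactor of that column: `C_{ij} = C_{jj}`. -/
theorem cofactor_eq_diag {n : ℕ} (hn : 1 ≤ n)
    (L : Matrix (Fin (n+1)) (Fin (n+1)) ℝ)
    (hcol : ∀ j, ∑ i, L i j = 0)
    (i j : Fin (n+1)) :
    cofactor L i j = cofactor L j j := by
  have hadj : ∀ a b : Fin (n+1), cofactor L a b = (L.updateRow a (Pi.single b 1)).det := by
    intro a b
    rw [cofactor, ← adjugate_fin_succ_eq_det_submatrix, adjugate_apply]
  have hrow : ∑ k, L k = 0 := by
    funext c
    simpa [Finset.sum_apply c Finset.univ (fun k => L k)] using hcol c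
  rw [hadj, hadj]
  exact key_updateRow_det L hrow i j _
end

section
/- Let n ≥ 2 and let L be an n×n real symmetric matrix with all column sums equal to zero. Let C_{ij} denote the (i,j) cofactor of L. Then all cofactors of L are equal: C_{ij} = C_{11} for all 1 ≤ i, j ≤ n. -/
open Matrix Filter Set Topology

/-- For a symmetric square matrix with zero column sums, all cofactors are equal:
`C_{ij} = C_{11}` for all `i, j`. -/
theorem cofactor_all_eq_of_symm {n : ℕ} (hn : 1 ≤ n)
    (L : Matrix (Fin (n+1)) (Fin (n+1)) ℝ)
    (hsym : L.IsSymm)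
    (hcol : ∀ j, ∑ i, L i j = 0)
    (i j : Fin (n+1)) :
    cofactor L i j = cofactor L 0 0 := by
  classical
  have hcof : ∀ a b : Fin (n+1), cofactor L a b = adjugate L b a := by
    intro a b
    rw [Matrix.adjugate_fin_succ_eq_det_submatrix, cofactor, add_comm (a : ℕ)]
  have hrow : ∀ a, ∑ k, L a k = 0 := by
    intro a
    have := hcol a
    calc ∑ k, L a k = ∑ k, L k a := by
          refine Finset.sum_congr rfl fun k _ => ?_
          exact (hsym.apply a k).symm
      _ = 0 := hcol a
  have hones : (fun _ : Fin (n+1) => (1 : ℝ)) ≠ 0 := by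
    intro h
    have := congrFun h 0
    simp at this
  have hker : L *ᵥ (fun _ => (1 : ℝ)) = 0 := by
    funext a
    simp only [Matrix.mulVec, dotProduct, mul_one, Pi.zero_apply]
    exact hrow a
  have hdet : L.det = 0 := by
    rw [← Matrix.exists_mulVec_eq_zero_iff]
    exact ⟨_, hones, hker⟩
  have hLA : L * adjugate L = 0 := by
    rw [Matrix.mul_adjugate, hdet, zero_smul]
  have hAsymm : ∀ p q, adjugate L p q = adjugate L q p := by
    intro p q
    have h : (adjugate L)ᵀ = adjugate L := by
      rw [Matrix.adjugate_transpose, hsym]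
    simpa using congrFun (congrFun h q) p
  -- all entries within a fixed column of the adjugate are equal
  have hconst : ∀ p q r : Fin (n+1), adjugate L p r = adjugate L q r := by
    by_cases hA : adjugate L = 0
    · intro p q r; simp [hA]
    · -- some cofactor is nonzero, so rank L = n
      obtain ⟨a, ha⟩ : ∃ a, adjugate L a ≠ 0 := by
        by_contra h
        push_neg at h
        exact hA (funext h)
      obtain ⟨b, hb⟩ : ∃ b, adjugate L a b ≠ 0 := by
        by_contra h
        push_neg at h
        exact ha (funext h)
      have hdetsub : (L.submatrix b.succAbove a.succAbove).det ≠ 0 := by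
        intro h0
        rw [Matrix.adjugate_fin_succ_eq_det_submatrix, h0, mul_zero] at hb
        exact hb rfl
      have hsubrank : (L.submatrix b.succAbove a.succAbove).rank = n := by
        rw [Matrix.rank_of_isUnit _ ((Matrix.isUnit_iff_isUnit_det _).mpr
          (isUnit_iff_ne_zero.mpr hdetsub)), Fintype.card_fin]
      have hfac : L.submatrix b.succAbove a.succAbove =
          (1 : Matrix (Fin (n+1)) (Fin (n+1)) ℝ).submatrix b.succAbove id * L *
            (1 : Matrix (Fin (n+1)) (Fin (n+1)) ℝ).submatrix id a.succAbove := by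
        have h1 : (1 : Matrix (Fin (n+1)) (Fin (n+1)) ℝ).submatrix b.succAbove id * L =
            L.submatrix b.succAbove id := by
          have := Matrix.submatrix_mul (1 : Matrix (Fin (n+1)) (Fin (n+1)) ℝ) L
            b.succAbove id id Function.bijective_id
          simpa using this.symm
        have h2 : L.submatrix b.succAbove id *
            (1 : Matrix (Fin (n+1)) (Fin (n+1)) ℝ).submatrix id a.succAbove =
            L.submatrix b.succAbove a.succAbove := by
          have := Matrix.submatrix_mul L (1 : Matrix (Fin (n+1)) (Fin (n+1)) ℝ)
            b.succAbove id a.succAbove Function.bijective_id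
          simpa using this.symm
        rw [h1, h2]
      have hrankge : n ≤ L.rank := by
        calc n = (L.submatrix b.succAbove a.succAbove).rank := hsubrank.symm
          _ ≤ ((1 : Matrix (Fin (n+1)) (Fin (n+1)) ℝ).submatrix b.succAbove id * L).rank := by
              rw [hfac]; exact Matrix.rank_mul_le_left _ _
          _ ≤ L.rank := Matrix.rank_mul_le_right _ _
      -- kernel analysis
      set K := LinearMap.ker L.mulVecLin with hK
      have honesmem : (fun _ : Fin (n+1) => (1 : ℝ)) ∈ K := by
        simp only [hK, LinearMap.mem_ker, Matrix.mulVecLin_apply]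
        exact hker
      have hKpos : 0 < Module.finrank ℝ K := by
        rw [Module.finrank_pos_iff]
        exact ⟨⟨⟨_, honesmem⟩, 0, fun h => hones (congrArg Subtype.val h)⟩⟩
      have hsum : L.rank + Module.finrank ℝ K = n + 1 := by
        have := LinearMap.finrank_range_add_finrank_ker L.mulVecLin
        rw [Module.finrank_pi] at this
        simpa [Matrix.rank, hK, Fintype.card_fin] using this
      have hK1 : Module.finrank ℝ K = 1 := by omega
      have hspan := (finrank_eq_one_iff_of_nonzero'
        (⟨_, honesmem⟩ : K) (fun h => hones (congrArg Subtype.val h))).mp hK1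
      intro p q r
      have hcolmem : (fun k => adjugate L k r) ∈ K := by
        simp only [hK, LinearMap.mem_ker, Matrix.mulVecLin_apply]
        funext p'
        have := congrFun (congrFun hLA p') r
        simpa [Matrix.mul_apply, Matrix.mulVec, dotProduct] using this
      obtain ⟨c, hc⟩ := hspan ⟨_, hcolmem⟩
      have hc' : (fun k => c * 1) = (fun k => adjugate L k r) :=
        congrArg Subtype.val hc
      have hp := congrFun hc' p
      have hq := congrFun hc' q
      change c * 1 = adjugate L p r at hp; change c * 1 = adjugate L q r at hq
      rw [← hp, ← hq]
  rw [hcof i j, hcof 0 0, hconst j 0 i, hAsymm 0 i, hconst i 0 0]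
end

section
/- Let n ≥ 2 and let L be an n×n real matrix with all column sums equal to zero, and let C_{ij} denote the (i,j) cofactor of L. Then the vector (C_{11}, C_{22}, …, C_{nn})ᵀ of diagonal cofactors lies in the kernel of L, i.e., L·(C_{11},…,C_{nn})ᵀ = 0. -/
open Matrix Filter Set Topology

open Finset in
private lemma det_updateRow_indep {m : ℕ} (L : Matrix (Fin m) (Fin m) ℝ)
    (hcol : ∀ c, ∑ r, L r c = 0) (u : Fin m → ℝ) (j k : Fin m) :
    (L.updateRow j u).det = (L.updateRow k u).det := by
  rcases eq_or_ne j k with rfl | hjk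
  · rfl
  set M := L.updateRow j u with hM
  have hsum : ∑ r, M r = u - L j := by
    funext c
    have h1 : ∀ r ∈ Finset.univ \ {j}, M r c = L r c := by
      intro r hr
      simp only [Finset.mem_sdiff, Finset.mem_singleton] at hr
      simp [hM, updateRow_ne hr.2]
    have h2 : ∑ r, M r c = ∑ r, L r c - L j c + u c := by
      rw [Finset.sum_eq_sum_sdiff_singleton_add (Finset.mem_univ j) (fun r => M r c),
        Finset.sum_congr rfl h1,
        Finset.sum_eq_sum_sdiff_singleton_add (Finset.mem_univ j) (fun r => L r c)]
      simp [hM]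
    have h3 : ∑ r, (M r) c = ∑ r, M r c := by
      simp [Finset.sum_apply]
    simp only [Pi.sub_apply]
    rw [← h3] at h2
    rw [show (∑ r, M r) c = ∑ r, M r c from Finset.sum_apply c _ _]
    rw [h2, hcol c]
    ring
  have hMkeq : M k = (u + (-(L j))) + (-∑ r ∈ Finset.univ.erase k, M r) := by
    have h4 := Finset.add_sum_erase Finset.univ M (Finset.mem_univ k)
    have h3 : M k = (∑ r, M r) - ∑ r ∈ Finset.univ.erase k, M r := by
      rw [← h4]; abel
    rw [h3, hsum]; abel
  have e1 : M.det = (M.updateRow k (M k)).det := by rw [updateRow_eq_self]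
  have hzero1 : (M.updateRow k u).det = 0 := by
    apply det_zero_of_row_eq hjk
    rw [updateRow_ne hjk, updateRow_self, hM, updateRow_self]
  have hzero2 : (M.updateRow k (-∑ r ∈ Finset.univ.erase k, M r)).det = 0 := by
    have haux := det_updateRow_sum_aux M (Finset.univ.erase k)
      (Finset.univ.notMem_erase k) (fun _ => (-1 : ℝ)) 0
    simp only [zero_smul, zero_add, neg_one_smul, smul_eq_mul, zero_mul] at haux
    rw [← (Finset.sum_neg_distrib (f := fun r => M r) (s := Finset.univ.erase k))]
    exact haux
  have hswap : (M.updateRow k (-(L j))).det = (L.updateRow k u).det := by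
    have heq : (L.updateRow k u).submatrix (Equiv.swap j k) id = M.updateRow k (L j) := by
      ext r c
      rcases eq_or_ne r j with rfl | hrj
      · rw [submatrix_apply, Equiv.swap_apply_left, id, updateRow_self,
          updateRow_ne hjk, hM, updateRow_self]
      rcases eq_or_ne r k with rfl | hrk
      · rw [submatrix_apply, Equiv.swap_apply_right, id, updateRow_ne hjk,
          updateRow_self]
      · have hs : Equiv.swap j k r = r := Equiv.swap_apply_of_ne_of_ne hrj hrk
        rw [submatrix_apply, hs, id, updateRow_ne hrk, updateRow_ne hrk, hM,
          updateRow_ne hrj]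
    have hdp := det_permute (Equiv.swap j k) (L.updateRow k u)
    rw [heq, Equiv.Perm.sign_swap hjk] at hdp
    have h5 : (M.updateRow k (-(L j))) = M.updateRow k ((-1 : ℝ) • (L j)) := by
      ext r c; rcases eq_or_ne r k with rfl | hrk <;>
        simp [updateRow_self, updateRow_ne, *]
    rw [h5, det_updateRow_smul, hdp]
    norm_num
  rw [e1, hMkeq, det_updateRow_add, det_updateRow_add, hzero1, hzero2, hswap]
  ring

/-- For a square matrix with zero column sums, the vector of diagonal cofactors
lies in the kernel of `L`: `L·(C_{11},…,C_{nn})ᵀ = 0`. -/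
theorem mulVec_diag_cofactor_eq_zero {n : ℕ} (hn : 1 ≤ n)
    (L : Matrix (Fin (n+1)) (Fin (n+1)) ℝ)
    (hcol : ∀ j, ∑ i, L i j = 0) :
    L *ᵥ (fun i => cofactor L i i) = 0 := by
  have hcof : ∀ i j, cofactor L i j = adjugate L j i := by
    intro i j
    rw [adjugate_fin_succ_eq_det_submatrix, cofactor]
  have hconst : ∀ i j k, adjugate L i j = adjugate L i k := by
    intro i j k
    rw [adjugate_apply, adjugate_apply]
    exact det_updateRow_indep L hcol _ j k
  have hdet : L.det = 0 := by
    rw [← Matrix.exists_vecMul_eq_zero_iff]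
    refine ⟨fun _ => (1 : ℝ), ?_, ?_⟩
    · intro h
      have := congrFun h 0
      norm_num at this
    · funext c
      simp [vecMul, dotProduct, hcol c]
  funext r
  have : (L *ᵥ fun i => cofactor L i i) r = ∑ j, L r j * adjugate L j r := by
    simp only [mulVec, dotProduct]
    congr 1
    funext j
    rw [hcof j j, hconst j j r]
  rw [this]
  have hmul := Matrix.mul_adjugate L
  have := congrFun (congrFun hmul r) r
  simp only [Matrix.mul_apply] at this
  rw [this, hdet]
  simp
end

section
/- Let n ≥ 2 and let L be an n×n real matrix that is essentially nonnegative (all off-diagonal entries nonnegative), irreducible, and has all column sums equal to zero, and let C_{ij} denote the (i,j) cofactor of L. Then (−1)^{n−1}·C_{ii} > 0 for every i = 1,…,n; in particular, the vector (−1)^{n−1}·(C_{11},…,C_{nn})ᵀ is a strictly positive eigenvector of L corresponding to the eigenvalue 0. -/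
open Matrix Filter Set Topology

lemma my_eval_charpoly {m : ℕ} (M : Matrix (Fin m) (Fin m) ℝ) (t : ℝ) :
    M.charpoly.eval t = (t • (1 : Matrix (Fin m) (Fin m) ℝ) - M).det := by
  rw [Matrix.charpoly, ← Polynomial.coe_evalRingHom, RingHom.map_det]
  congr 1
  ext i j
  by_cases h : i = j
  · subst h
    simp [Matrix.charmatrix_apply_eq, Matrix.one_apply]
  · simp [Matrix.charmatrix_apply_ne _ _ _ h, Matrix.one_apply, h]

lemma det_shift_ne_zero {n : ℕ} (hn : 1 ≤ n) (L : Matrix (Fin (n+1)) (Fin (n+1)) ℝ)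
    (hess : ∀ i j, i ≠ j → 0 ≤ L i j)
    (hirr : IsIrreducibleMatrix L)
    (hcol : ∀ j, ∑ i, L i j = 0) (i : Fin (n+1)) {t : ℝ} (ht : 0 ≤ t) :
    (t • (1 : Matrix (Fin n) (Fin n) ℝ) - L.submatrix i.succAbove i.succAbove).det ≠ 0 := by
  set σ : Fin n → Fin (n+1) := i.succAbove with hσ
  intro hdet
  -- get a kernel vector of the transpose
  have hdetT : ((t • (1 : Matrix (Fin n) (Fin n) ℝ) - L.submatrix σ σ)ᵀ).det = 0 := by
    rwa [Matrix.det_transpose]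
  obtain ⟨v, hv0, hv⟩ := (Matrix.exists_mulVec_eq_zero_iff).mpr hdetT
  -- basic entry equation
  have heq : ∀ k : Fin n, t * v k = ∑ j, L (σ j) (σ k) * v j := by
    intro k
    have h1 := congrFun hv k
    simp only [Matrix.mulVec, dotProduct, Matrix.transpose_apply, Matrix.sub_apply,
      Matrix.smul_apply, Matrix.one_apply, Pi.zero_apply, smul_eq_mul, Matrix.submatrix_apply,
      sub_mul, Finset.sum_sub_distrib, mul_ite, mul_one, mul_zero, ite_mul, zero_mul] at h1
    rw [Finset.sum_ite_eq' Finset.univ k (fun j => t * v j)] at h1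
    simp only [Finset.mem_univ, if_true] at h1
    linarith [h1]
  -- max of |v|
  have hne : (Finset.univ : Finset (Fin n)).Nonempty := ⟨⟨0, hn⟩, Finset.mem_univ _⟩
  obtain ⟨k₀, _, hk₀⟩ := Finset.exists_max_image Finset.univ (fun j => |v j|) hne
  set m := |v k₀| with hm
  have hmax : ∀ j, |v j| ≤ m := fun j => hk₀ j (Finset.mem_univ j)
  have hmpos : 0 < m := by
    rcases Function.ne_iff.mp hv0 with ⟨j, hj⟩
    exact lt_of_lt_of_le (abs_pos.mpr hj) (hmax j)
  -- column sum facts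
  have hσne : ∀ j, σ j ≠ i := fun j => Fin.succAbove_ne i j
  have hcs : ∀ k : Fin n, ∑ j, L (σ j) (σ k) = - L i (σ k) := by
    intro k
    have := hcol (σ k)
    rw [Fin.sum_univ_succAbove (fun r => L r (σ k)) i] at this
    linarith
  have hoffnn : ∀ (j k : Fin n), j ≠ k → 0 ≤ L (σ j) (σ k) := by
    intro j k hjk
    exact hess _ _ (fun h => hjk (Fin.succAbove_right_injective h))
  have hinn : ∀ k : Fin n, 0 ≤ L i (σ k) := fun k => hess _ _ (Ne.symm (hσne k))
  -- key claim
  have key : ∀ k : Fin n, |v k| = m →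
      (t = 0 ∧ L i (σ k) = 0 ∧ ∀ j, j ≠ k → L (σ j) (σ k) ≠ 0 → |v j| = m) := by
    intro k hk
    have hsplit : ∑ j, L (σ j) (σ k) * v j
        = L (σ k) (σ k) * v k + ∑ j ∈ Finset.univ.erase k, L (σ j) (σ k) * v j := by
      rw [← Finset.add_sum_erase _ _ (Finset.mem_univ k)]
    have heq2 : (t - L (σ k) (σ k)) * v k = ∑ j ∈ Finset.univ.erase k, L (σ j) (σ k) * v j := by
      have := heq k
      rw [hsplit] at this
      ring_nf
      ring_nf at this
      linarith
    have herase : ∑ j ∈ Finset.univ.erase k, L (σ j) (σ k)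
        = - L i (σ k) - L (σ k) (σ k) := by
      have := hcs k
      rw [← Finset.add_sum_erase _ _ (Finset.mem_univ k)] at this
      linarith
    have hDnn : 0 ≤ t - L (σ k) (σ k) := by
      have h1 : 0 ≤ ∑ j ∈ Finset.univ.erase k, L (σ j) (σ k) :=
        Finset.sum_nonneg (fun j hj => hoffnn j k (Finset.ne_of_mem_erase hj))
      linarith [herase, hinn k, ht]
    -- triangle inequality chain
    have habs : (t - L (σ k) (σ k)) * m ≤ ∑ j ∈ Finset.univ.erase k, L (σ j) (σ k) * |v j| := by
      calc (t - L (σ k) (σ k)) * m = |(t - L (σ k) (σ k)) * v k| := by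
            rw [abs_mul, abs_of_nonneg hDnn, hk]
        _ = |∑ j ∈ Finset.univ.erase k, L (σ j) (σ k) * v j| := by rw [heq2]
        _ ≤ ∑ j ∈ Finset.univ.erase k, |L (σ j) (σ k) * v j| := Finset.abs_sum_le_sum_abs _ _
        _ = ∑ j ∈ Finset.univ.erase k, L (σ j) (σ k) * |v j| := by
            apply Finset.sum_congr rfl
            intro j hj
            rw [abs_mul, abs_of_nonneg (hoffnn j k (Finset.ne_of_mem_erase hj))]
    have hub : ∑ j ∈ Finset.univ.erase k, L (σ j) (σ k) * |v j|
        ≤ (- L i (σ k) - L (σ k) (σ k)) * m := by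
      rw [← herase, Finset.sum_mul]
      apply Finset.sum_le_sum
      intro j hj
      exact mul_le_mul_of_nonneg_left (hmax j) (hoffnn j k (Finset.ne_of_mem_erase hj))
    have h1 : t - L (σ k) (σ k) ≤ - L i (σ k) - L (σ k) (σ k) :=
      le_of_mul_le_mul_right (habs.trans hub) hmpos
    have ht0 : t = 0 := le_antisymm (by linarith [hinn k]) ht
    have hc0 : L i (σ k) = 0 := le_antisymm (by linarith) (hinn k)
    refine ⟨ht0, hc0, ?_⟩
    -- equality in the sum
    have hsum0 : ∑ j ∈ Finset.univ.erase k, L (σ j) (σ k) * (m - |v j|) = 0 := by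
      have hexp : ∑ j ∈ Finset.univ.erase k, L (σ j) (σ k) * (m - |v j|)
          = (∑ j ∈ Finset.univ.erase k, L (σ j) (σ k)) * m
            - ∑ j ∈ Finset.univ.erase k, L (σ j) (σ k) * |v j| := by
        rw [Finset.sum_mul, ← Finset.sum_sub_distrib]
        apply Finset.sum_congr rfl
        intro j hj
        ring
      have hge : (- L i (σ k) - L (σ k) (σ k)) * m
          ≤ ∑ j ∈ Finset.univ.erase k, L (σ j) (σ k) * |v j| := by
        have he : (- L i (σ k) - L (σ k) (σ k)) * m = (t - L (σ k) (σ k)) * m := by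
          rw [ht0, hc0]; ring
        rw [he]; exact habs
      rw [hexp, herase]
      linarith [hge, hub]
    intro j hjk hLjk
    have hterm := (Finset.sum_eq_zero_iff_of_nonneg (fun j hj =>
      mul_nonneg (hoffnn j k (Finset.ne_of_mem_erase hj)) (by linarith [hmax j]))).mp hsum0 j
      (Finset.mem_erase.mpr ⟨hjk, Finset.mem_univ j⟩)
    rcases mul_eq_zero.mp hterm with h | h
    · exact absurd h hLjk
    · linarith [hmax j]
  -- irreducibility contradiction
  set S : Set (Fin (n+1)) := {b | ∃ k : Fin n, σ k = b ∧ |v k| = m} with hS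
  have hiS : i ∈ Sᶜ := by
    rintro ⟨k, hk, -⟩
    exact hσne k hk
  have hSne : (Sᶜ : Set (Fin (n+1))).Nonempty := ⟨i, hiS⟩
  have hk₀S : σ k₀ ∈ S := ⟨k₀, rfl, rfl⟩
  have hSuniv : (Sᶜ : Set (Fin (n+1))) ≠ Set.univ := by
    intro h
    have : σ k₀ ∈ (Sᶜ : Set (Fin (n+1))) := h ▸ Set.mem_univ _
    exact this hk₀S
  obtain ⟨a, ha, b, hb, hL⟩ := hirr Sᶜ hSne hSuniv
  rw [compl_compl] at hb
  obtain ⟨k, rfl, hk⟩ := hb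
  obtain ⟨-, hLik, hclose⟩ := key k hk
  have hai : a ≠ i := by
    intro h; rw [h] at hL; exact hL hLik
  obtain ⟨j, rfl⟩ := Fin.exists_succAbove_eq hai
  have hjk : j ≠ k := by
    intro h; subst h; exact ha ⟨j, rfl, hk⟩
  exact ha ⟨j, rfl, hclose j hjk hL⟩

lemma my_adj_diag (A : Matrix (Fin (n+1)) (Fin (n+1)) ℝ) (j : Fin (n+1)) :
    A.adjugate j j = (A.submatrix j.succAbove j.succAbove).det := by
  rw [Matrix.adjugate_apply, Matrix.det_succ_row _ j]
  rw [Finset.sum_eq_single j]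
  · have h2 : ((A.updateRow j (Pi.single j (1:ℝ))).submatrix j.succAbove j.succAbove)
        = A.submatrix j.succAbove j.succAbove := by
      ext a b
      exact congrFun (Matrix.updateRow_ne (Fin.succAbove_ne j a)) _
    rw [Matrix.updateRow_self, h2, Even.neg_one_pow ⟨(j:ℕ), rfl⟩]
    simp
  · intro c _ hc
    rw [Matrix.updateRow_self]
    rw [Pi.single_eq_of_ne hc]
    ring
  · intro h
    exact absurd (Finset.mem_univ j) h

lemma det_sub_pos {n : ℕ} (hn : 1 ≤ n) (L : Matrix (Fin (n+1)) (Fin (n+1)) ℝ)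
    (hess : ∀ i j, i ≠ j → 0 ≤ L i j)
    (hirr : IsIrreducibleMatrix L)
    (hcol : ∀ j, ∑ i, L i j = 0) (i : Fin (n+1)) :
    0 < (-1 : ℝ)^n * (L.submatrix i.succAbove i.succAbove).det := by
  set M := L.submatrix i.succAbove i.succAbove with hM
  set P := M.charpoly with hP
  have hPev : ∀ t : ℝ, P.eval t = (t • (1 : Matrix (Fin n) (Fin n) ℝ) - M).det :=
    my_eval_charpoly M
  have hP0 : ∀ t : ℝ, 0 ≤ t → P.eval t ≠ 0 := by
    intro t ht
    rw [hPev]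
    exact det_shift_ne_zero hn L hess hirr hcol i ht
  have hmonic : P.Monic := M.charpoly_monic
  have hdeg : 0 < P.degree := by
    apply Polynomial.natDegree_pos_iff_degree_pos.mp
    rw [hP, Matrix.charpoly_natDegree_eq_dim, Fintype.card_fin]
    exact hn
  have htt : Tendsto (fun x => P.eval x) atTop atTop :=
    P.tendsto_atTop_of_leadingCoeff_nonneg hdeg (by rw [hmonic.leadingCoeff]; norm_num)
  obtain ⟨T, hT0, hT1⟩ : ∃ T : ℝ, 0 ≤ T ∧ 1 ≤ P.eval T :=
    ((eventually_ge_atTop (0:ℝ)).and (htt.eventually_ge_atTop 1)).exists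
  have hpos : 0 < P.eval 0 := by
    rcases lt_trichotomy (P.eval 0) 0 with h | h | h
    · exfalso
      have hsub : (0:ℝ) ∈ Set.Icc (P.eval 0) (P.eval T) := ⟨le_of_lt h, by linarith⟩
      obtain ⟨c, hc, hfc⟩ := intermediate_value_Icc hT0 (P.continuous.continuousOn) hsub
      exact hP0 c hc.1 hfc
    · exact absurd h (hP0 0 le_rfl)
    · exact h
  have h0 : P.eval 0 = (-1 : ℝ)^n * M.det := by
    rw [hPev 0, zero_smul, zero_sub, Matrix.det_neg, Fintype.card_fin]
  rwa [h0] at hpos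

lemma ker_transpose_const {n : ℕ} (L : Matrix (Fin (n+1)) (Fin (n+1)) ℝ)
    (hcol : ∀ j, ∑ i, L i j = 0)
    (hdetM : ∀ i : Fin (n+1), (L.submatrix i.succAbove i.succAbove).det ≠ 0)
    (x : Fin (n+1) → ℝ) (hx : Lᵀ *ᵥ x = 0) (i : Fin (n+1)) :
    ∀ b, x b = x i := by
  set σ : Fin n → Fin (n+1) := i.succAbove with hσ
  set y : Fin (n+1) → ℝ := fun k => x k - x i with hy
  have hxk : ∀ k, ∑ m, L m k * x m = 0 := by
    intro k
    have := congrFun hx k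
    simpa [Matrix.mulVec, dotProduct, Matrix.transpose_apply] using this
  have hyk : ∀ k, ∑ m, L m k * y m = 0 := by
    intro k
    have h1 : ∑ m, L m k * y m = ∑ m, L m k * x m - (∑ m, L m k) * x i := by
      rw [Finset.sum_mul, ← Finset.sum_sub_distrib]
      apply Finset.sum_congr rfl
      intro m _
      simp [hy]; ring
    rw [h1, hxk k, hcol k]
    ring
  -- the deleted system
  have hz : ((L.submatrix σ σ)ᵀ *ᵥ (y ∘ σ)) = 0 := by
    funext a
    have h1 := hyk (σ a)
    rw [Fin.sum_univ_succAbove (fun m => L m (σ a) * y m) i] at h1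
    have hyi : y i = 0 := by simp [hy]
    simp only [Matrix.mulVec, dotProduct, Matrix.transpose_apply,
      Matrix.submatrix_apply, Function.comp_apply, Pi.zero_apply]
    rw [hyi, mul_zero, zero_add] at h1
    exact h1
  have hz0 : y ∘ σ = 0 := by
    by_contra hne
    have : ((L.submatrix σ σ)ᵀ).det = 0 :=
      Matrix.exists_mulVec_eq_zero_iff.mp ⟨y ∘ σ, hne, hz⟩
    rw [Matrix.det_transpose] at this
    exact hdetM i this
  intro b
  rcases eq_or_ne b i with rfl | hbi
  · rfl
  · obtain ⟨a, rfl⟩ := Fin.exists_succAbove_eq hbi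
    have : y (σ a) = 0 := congrFun hz0 a
    simp only [hy] at this
    linarith


/-- For an essentially nonnegative, irreducible matrix `L` of size `n+1` with zero
column sums, `(-1)^n·C_{ii} > 0` for all `i` (here `(-1)^n = (-1)^{(n+1)-1}`), so the vector
`(-1)^n·(C_{11},…,C_{nn})ᵀ` is a strictly positive eigenvector of `L` for the eigenvalue `0`. -/


theorem diag_cofactor_pos {n : ℕ} (hn : 1 ≤ n)
    (L : Matrix (Fin (n+1)) (Fin (n+1)) ℝ)
    (hess : ∀ i j, i ≠ j → 0 ≤ L i j)
    (hirr : IsIrreducibleMatrix L)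
    (hcol : ∀ j, ∑ i, L i j = 0) :
    (∀ i, 0 < (-1 : ℝ) ^ n * cofactor L i i) ∧
    L *ᵥ (fun i => (-1 : ℝ) ^ n * cofactor L i i) = (0 : ℝ) • (fun i => (-1 : ℝ) ^ n * cofactor L i i) := by
  have hcof : ∀ i : Fin (n+1), cofactor L i i = (L.submatrix i.succAbove i.succAbove).det := by
    intro i
    rw [cofactor, Even.neg_one_pow ⟨(i:ℕ), rfl⟩, one_mul]
  have hpos : ∀ i, 0 < (-1:ℝ)^n * cofactor L i i := by
    intro i
    rw [hcof i]
    exact det_sub_pos hn L hess hirr hcol i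
  refine ⟨hpos, ?_⟩
  have hdetL : L.det = 0 := by
    have h1 : Lᵀ *ᵥ (fun _ => (1:ℝ)) = 0 := by
      funext k
      simpa [Matrix.mulVec, dotProduct, Matrix.transpose_apply] using hcol k
    have h2 : (Lᵀ).det = 0 :=
      Matrix.exists_mulVec_eq_zero_iff.mp
        ⟨fun _ => 1, fun h => one_ne_zero (congrFun h 0), h1⟩
    rwa [Matrix.det_transpose] at h2
  have hdetM : ∀ i : Fin (n+1), (L.submatrix i.succAbove i.succAbove).det ≠ 0 := by
    intro i h
    have := det_sub_pos hn L hess hirr hcol i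
    rw [h, mul_zero] at this
    exact lt_irrefl 0 this
  have hrow : ∀ j k, L.adjugate j k = L.adjugate j j := by
    intro j k
    have hx : Lᵀ *ᵥ (fun m => L.adjugate j m) = 0 := by
      funext c
      have h1 : (L.adjugate * L) j c = 0 := by
        rw [Matrix.adjugate_mul, hdetL]; simp
      rw [Matrix.mul_apply] at h1
      simp only [Matrix.mulVec, dotProduct, Matrix.transpose_apply, Pi.zero_apply]
      rw [← h1]
      apply Finset.sum_congr rfl
      intro m _
      ring
    exact ker_transpose_const L hcol hdetM _ hx j k
  have hcofadj : ∀ j, cofactor L j j = L.adjugate j j := by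
    intro j
    rw [my_adj_diag, hcof]
  rw [zero_smul]
  funext r
  show ∑ j, L r j * ((-1:ℝ)^n * cofactor L j j) = 0
  calc ∑ j, L r j * ((-1:ℝ)^n * cofactor L j j)
      = (-1:ℝ)^n * ∑ j, L r j * L.adjugate j r := by
        rw [Finset.mul_sum]
        apply Finset.sum_congr rfl
        intro j _
        rw [hcofadj j, hrow j r]
        ring
    _ = (-1:ℝ)^n * (L * L.adjugate) r r := by rw [Matrix.mul_apply]
    _ = 0 := by rw [Matrix.mul_adjugate, hdetL]; simp
end

section
/- Let n ≥ 2, let L be an n×n real matrix that is essentially nonnegative (all off-diagonal entries nonnegative), irreducible, and has all column sums equal to zero, let γ_i > 0 for i = 1,…,n, and set D = diag(γ_1,…,γ_n) and V(d) = D − d·L (which is invertible for all d ≥ 0). Let adj(L) denote the adjugate of L and C_{ii} its diagonal cofactors. Then, entrywise, V(d)⁻¹ converges as d → ∞ to the matrix V∞⁻¹ := (1 / Σ_{i=1}^n γ_i·C_{ii}) · adj(L); moreover this limit matrix has all entries strictly positive and has rank one. -/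
open Matrix Filter Set Topology

/-- Key dominance computation. -/
lemma dom_key {m : ℕ} (B : Matrix (Fin m) (Fin m) ℝ)
    (hoff : ∀ k j, k ≠ j → B k j ≤ 0) (x : Fin m → ℝ) (j : Fin m)
    (hmax : ∀ k, |x k| ≤ |x j|)
    (heq : ∑ k, x k * B k j = 0)
    (hs : 0 ≤ ∑ k, B k j) :
    |x j| * (∑ k, B k j) ≤ 0 ∧ ∀ k, k ≠ j → (|x j| - |x k|) * (-B k j) = 0 := by
  classical
  set c := |x j| with hc
  have hc0 : 0 ≤ c := abs_nonneg _
  set s : Finset (Fin m) := Finset.univ.erase j with hsdef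
  have hsplit : ∀ f : Fin m → ℝ, ∑ k, f k = (∑ k ∈ s, f k) + f j := by
    intro f
    rw [hsdef, Finset.sum_erase_add]
    exact Finset.mem_univ j
  have hdiag : 0 ≤ B j j := by
    have h1 : ∑ k ∈ s, B k j ≤ 0 := by
      apply Finset.sum_nonpos
      intro k hk
      exact hoff k j (Finset.ne_of_mem_erase hk)
    have := hsplit (fun k => B k j)
    linarith [hs, h1, this]
  have hrow : (∑ k ∈ s, x k * B k j) + x j * B j j = 0 := by
    rw [← hsplit]; exact heq
  have habs : c * B j j ≤ ∑ k ∈ s, |x k| * (-B k j) := by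
    have h1 : c * B j j = |x j * B j j| := by
      rw [abs_mul, abs_of_nonneg hdiag]
    have h2 : |x j * B j j| = |∑ k ∈ s, x k * B k j| := by
      rw [show x j * B j j = -(∑ k ∈ s, x k * B k j) by linarith]
      rw [abs_neg]
    have h3 : |∑ k ∈ s, x k * B k j| ≤ ∑ k ∈ s, |x k| * (-B k j) := by
      refine (Finset.abs_sum_le_sum_abs _ _).trans ?_
      apply Finset.sum_le_sum
      intro k hk
      rw [abs_mul, abs_of_nonpos (hoff k j (Finset.ne_of_mem_erase hk))]
    linarith [h1, h2, h3]
  have hmono : ∑ k ∈ s, |x k| * (-B k j) ≤ ∑ k ∈ s, c * (-B k j) := by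
    apply Finset.sum_le_sum
    intro k hk
    have : 0 ≤ -B k j := by linarith [hoff k j (Finset.ne_of_mem_erase hk)]
    exact mul_le_mul_of_nonneg_right (hmax k) this
  have hsumsplit : ∑ k ∈ s, (-B k j) = B j j - ∑ k, B k j := by
    have := hsplit (fun k => B k j)
    have h2 : ∑ k ∈ s, (-B k j) = -∑ k ∈ s, B k j := by rw [Finset.sum_neg_distrib]
    linarith
  constructor
  · have : ∑ k ∈ s, c * (-B k j) = c * (B j j - ∑ k, B k j) := by
      rw [← Finset.mul_sum, hsumsplit]
    nlinarith [habs, hmono, this]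
  · intro k hk
    have hterm : ∀ k ∈ s, 0 ≤ (c - |x k|) * (-B k j) := by
      intro k hk
      apply mul_nonneg
      · linarith [hmax k]
      · linarith [hoff k j (Finset.ne_of_mem_erase hk)]
    have hsum0 : ∑ k ∈ s, (c - |x k|) * (-B k j) ≤ 0 := by
      have hexp : ∑ k ∈ s, (c - |x k|) * (-B k j)
          = (∑ k ∈ s, c * (-B k j)) - ∑ k ∈ s, |x k| * (-B k j) := by
        rw [← Finset.sum_sub_distrib]
        apply Finset.sum_congr rfl
        intro k _; ring
      have h4 : ∑ k ∈ s, c * (-B k j) = c * (B j j - ∑ k, B k j) := by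
        rw [← Finset.mul_sum, hsumsplit]
      nlinarith [habs, hexp, h4]
    have heach := (Finset.sum_eq_zero_iff_of_nonneg hterm).mp
      (le_antisymm hsum0 (Finset.sum_nonneg hterm))
    exact heach k (Finset.mem_erase.mpr ⟨hk, Finset.mem_univ k⟩)

lemma det_ne_zero_of_strict {m : ℕ} (B : Matrix (Fin m) (Fin m) ℝ)
    (hoff : ∀ k j, k ≠ j → B k j ≤ 0)
    (hsum : ∀ j, 0 < ∑ k, B k j) : B.det ≠ 0 := by
  classical
  intro hdet
  obtain ⟨v, hv, hvB⟩ := Matrix.exists_vecMul_eq_zero_iff.mpr hdet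
  obtain ⟨a, ha⟩ := Function.ne_iff.mp hv
  obtain ⟨j, -, hj⟩ := Finset.exists_max_image Finset.univ (fun k => |v k|)
    ⟨a, Finset.mem_univ a⟩
  have hmax : ∀ k, |v k| ≤ |v j| := fun k => hj k (Finset.mem_univ k)
  have hcpos : 0 < |v j| := lt_of_lt_of_le (abs_pos.mpr ha) (hmax a)
  have heq : ∑ k, v k * B k j = 0 := by
    have := congrFun hvB j
    simpa [Matrix.vecMul, dotProduct] using this
  have := (dom_key B hoff v j hmax heq (le_of_lt (hsum j))).1
  nlinarith [hsum j, hcpos]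

lemma minor_det_ne_zero {n : ℕ} (L : Matrix (Fin (n+1)) (Fin (n+1)) ℝ)
    (hess : ∀ i j, i ≠ j → 0 ≤ L i j)
    (hirr : IsIrreducibleMatrix L)
    (hcol : ∀ j, ∑ i, L i j = 0) (i : Fin (n+1)) :
    (L.submatrix i.succAbove i.succAbove).det ≠ 0 := by
  classical
  intro hdet
  obtain ⟨x, hx, hxM⟩ := Matrix.exists_vecMul_eq_zero_iff.mpr hdet
  set y : Fin (n+1) → ℝ := i.insertNth 0 x with hy
  have hyi : y i = 0 := by simp [hy]
  have hys : ∀ k, y (i.succAbove k) = x k := by intro k; simp [hy]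
  obtain ⟨a, ha⟩ := Function.ne_iff.mp hx
  obtain ⟨b, -, hb⟩ := Finset.exists_max_image Finset.univ (fun k => |y k|)
    ⟨i, Finset.mem_univ i⟩
  have hmax : ∀ k, |y k| ≤ |y b| := fun k => hb k (Finset.mem_univ k)
  have hcpos : 0 < |y b| := by
    refine lt_of_lt_of_le ?_ (hmax (i.succAbove a))
    rw [hys]; exact abs_pos.mpr ha
  set S : Set (Fin (n+1)) := {c | |y c| = |y b|} with hS
  have hiS : i ∉ S := by
    simp only [hS, Set.mem_setOf_eq, hyi, abs_zero]
    exact fun h => absurd h.symm (ne_of_gt hcpos)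
  have hbS : b ∈ S := rfl
  -- column equation for any column in S
  have hcoleq : ∀ c : Fin (n+1), c ≠ i → ∑ a, y a * L a c = 0 := by
    intro c hc
    obtain ⟨j, rfl⟩ := Fin.exists_succAbove_eq hc
    rw [Fin.sum_univ_succAbove _ i]
    simp only [hyi, zero_mul, zero_add, hys]
    have := congrFun hxM j
    simpa [Matrix.vecMul, dotProduct, Matrix.submatrix_apply] using this
  -- propagation claim
  have hclaim : ∀ a c, c ∈ S → a ≠ c → L a c ≠ 0 → a ∈ S := by
    intro a c hcS hac hL
    have hci : c ≠ i := fun h => hiS (h ▸ hcS)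
    have heq : ∑ k, y k * (-L) k c = 0 := by
      simp only [Matrix.neg_apply, mul_neg, Finset.sum_neg_distrib, hcoleq c hci, neg_zero]
    have hmax' : ∀ k, |y k| ≤ |y c| := by
      intro k
      have : |y c| = |y b| := hcS
      rw [this]; exact hmax k
    have hoff : ∀ k j, k ≠ j → (-L) k j ≤ 0 := by
      intro k j hkj; simp only [Matrix.neg_apply, neg_nonpos]; exact hess k j hkj
    have hs : 0 ≤ ∑ k, (-L) k c := by
      simp only [Matrix.neg_apply, Finset.sum_neg_distrib, hcol c, neg_zero, le_refl]
    obtain ⟨-, h2⟩ := dom_key (-L) hoff y c hmax' heq hs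
    have := h2 a hac
    simp only [Matrix.neg_apply, neg_neg] at this
    have hyc : |y c| = |y b| := hcS
    rcases mul_eq_zero.mp this with h | h
    · show |y a| = |y b|
      rw [← hyc]; linarith [abs_nonneg (y a), hmax' a]
    · exact absurd h hL
  -- irreducibility contradiction
  obtain ⟨a, haSc, c, hcS, hL⟩ := hirr Sᶜ ⟨i, hiS⟩ (fun h => by
    have : b ∈ Sᶜ := h ▸ Set.mem_univ b
    exact this hbS)
  rw [compl_compl] at hcS
  have hac : a ≠ c := fun h => haSc (h ▸ hcS)
  exact haSc (hclaim a c hcS hac hL)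

lemma neg_minor_det_pos {n : ℕ} (L : Matrix (Fin (n+1)) (Fin (n+1)) ℝ)
    (hess : ∀ i j, i ≠ j → 0 ≤ L i j)
    (hirr : IsIrreducibleMatrix L)
    (hcol : ∀ j, ∑ i, L i j = 0) (i : Fin (n+1)) :
    0 < (-(L.submatrix i.succAbove i.succAbove)).det := by
  classical
  set M : Matrix (Fin n) (Fin n) ℝ := L.submatrix i.succAbove i.succAbove with hM
  have hMoff : ∀ k j, k ≠ j → 0 ≤ M k j := by
    intro k j hkj
    exact hess _ _ (fun h => hkj (i.succAbove_right_injective h))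
  have hMcolsum : ∀ j, ∑ k, (-M) k j = L i (i.succAbove j) := by
    intro j
    have h1 := hcol (i.succAbove j)
    rw [Fin.sum_univ_succAbove _ i] at h1
    simp only [Matrix.neg_apply, Finset.sum_neg_distrib, hM, Matrix.submatrix_apply]
    linarith
  -- the homotopy
  set φ : ℝ → ℝ := fun s => (-M + s • (1 : Matrix (Fin n) (Fin n) ℝ)).det with hφ
  have hφcont : Continuous φ := by
    apply Continuous.matrix_det
    exact continuous_const.add (continuous_id.smul continuous_const)
  have hφne : ∀ s : ℝ, 0 ≤ s → φ s ≠ 0 := by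
    intro s hs
    rcases eq_or_lt_of_le hs with rfl | hs
    · have : -M + (0:ℝ) • (1 : Matrix (Fin n) (Fin n) ℝ) = -M := by simp
      rw [hφ]; simp only [this]
      rw [Matrix.det_neg]
      intro h
      rcases mul_eq_zero.mp h with h | h
      · exact absurd h (pow_ne_zero _ (by norm_num))
      · exact minor_det_ne_zero L hess hirr hcol i (by simpa [hM] using h)
    · apply det_ne_zero_of_strict
      · intro k j hkj
        simp only [Matrix.add_apply, Matrix.neg_apply, Matrix.smul_apply,
          Matrix.one_apply_ne hkj, smul_eq_mul, mul_zero, add_zero, neg_nonpos]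
        exact hMoff k j hkj
      · intro j
        have : ∑ k, (-M + s • (1 : Matrix (Fin n) (Fin n) ℝ)) k j
            = (∑ k, (-M) k j) + s := by
          simp only [Matrix.add_apply]
          rw [Finset.sum_add_distrib]
          congr 1
          rw [Finset.sum_eq_single j]
          · simp
          · intro k _ hkj; simp [Matrix.one_apply_ne hkj]
          · intro h; exact absurd (Finset.mem_univ j) h
        rw [this, hMcolsum j]
        have := hess i (i.succAbove j) (Fin.succAbove_ne i j).symm
        linarith
  -- positivity at a large point
  have hlarge : ∃ s : ℝ, 0 < s ∧ 0 < φ s := by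
    set ψ : ℝ → ℝ := fun t => ((1 : Matrix (Fin n) (Fin n) ℝ) + t • (-M)).det with hψ
    have hψcont : Continuous ψ := by
      apply Continuous.matrix_det
      exact continuous_const.add (continuous_id.smul continuous_const)
    have hψ0 : ψ 0 = 1 := by simp [hψ]
    have hev : ∀ᶠ t in 𝓝 (0:ℝ), 0 < ψ t := by
      have hca : ContinuousAt ψ 0 := hψcont.continuousAt
      have hmem : Set.Ioi (0:ℝ) ∈ 𝓝 (ψ 0) := by rw [hψ0]; exact Ioi_mem_nhds one_pos
      exact hca hmem
    obtain ⟨t, ht, htpos⟩ := ((hev.filter_mono nhdsWithin_le_nhds).and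
      self_mem_nhdsWithin).exists (f := 𝓝[>] (0:ℝ))
    refine ⟨t⁻¹, inv_pos.mpr htpos, ?_⟩
    have hrw : -M + t⁻¹ • (1 : Matrix (Fin n) (Fin n) ℝ)
        = t⁻¹ • ((1 : Matrix (Fin n) (Fin n) ℝ) + t • (-M)) := by
      rw [smul_add, smul_smul, inv_mul_cancel₀ (ne_of_gt htpos), one_smul, add_comm]
    rw [hφ]; simp only [hrw, Matrix.det_smul]
    exact mul_pos (pow_pos (inv_pos.mpr htpos) _) ht
  obtain ⟨s₀, hs₀, hφs₀⟩ := hlarge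
  have hφ0 : φ 0 = (-M).det := by simp [hφ]
  rw [← hφ0]
  rcases lt_trichotomy (φ 0) 0 with h | h | h
  · exfalso
    have : (0:ℝ) ∈ Set.Ioo (φ 0) (φ s₀) := ⟨h, hφs₀⟩
    have hsub := intermediate_value_Ioo (le_of_lt hs₀) (hφcont.continuousOn (s := Set.Icc 0 s₀))
    obtain ⟨c, hc, hc0⟩ := hsub this
    exact hφne c (le_of_lt hc.1) hc0
  · exact absurd h (hφne 0 le_rfl)
  · exact h

lemma adjugate_diag_eq {n : ℕ} (A : Matrix (Fin (n+1)) (Fin (n+1)) ℝ) (k : Fin (n+1)) :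
    A.adjugate k k = (A.submatrix k.succAbove k.succAbove).det := by
  classical
  rw [Matrix.adjugate_apply, Matrix.det_succ_row _ k]
  rw [Finset.sum_eq_single k]
  · have h1 : (A.updateRow k (Pi.single k 1)) k k = 1 := by
      rw [Matrix.updateRow_self]; simp
    have h2 : (A.updateRow k (Pi.single k 1)).submatrix k.succAbove k.succAbove
        = A.submatrix k.succAbove k.succAbove := by
      ext a b
      simp only [Matrix.submatrix_apply]
      rw [Matrix.updateRow_ne (Fin.succAbove_ne k a)]
    rw [h1, h2]
    have h3 : (-1 : ℝ) ^ ((k : ℕ) + (k : ℕ)) = 1 := Even.neg_one_pow ⟨k, rfl⟩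
    rw [h3]; ring
  · intro j _ hjk
    have : (A.updateRow k (Pi.single k 1)) k j = 0 := by
      rw [Matrix.updateRow_self]
      exact Pi.single_eq_of_ne hjk 1
    rw [this]; ring
  · intro h; exact absurd (Finset.mem_univ k) h

lemma cofactor_diag_eq {n : ℕ} (A : Matrix (Fin (n+1)) (Fin (n+1)) ℝ) (k : Fin (n+1)) :
    cofactor A k k = (A.submatrix k.succAbove k.succAbove).det := by
  rw [cofactor, Even.neg_one_pow ⟨(k : ℕ), rfl⟩, one_mul]

lemma det_eq_zero_of_col {n : ℕ} (L : Matrix (Fin (n+1)) (Fin (n+1)) ℝ)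
    (hcol : ∀ j, ∑ i, L i j = 0) : L.det = 0 := by
  classical
  rw [← Matrix.exists_vecMul_eq_zero_iff]
  refine ⟨fun _ => 1, ?_, ?_⟩
  · intro h
    have := congrFun h 0
    norm_num at this
  · funext j
    simpa [Matrix.vecMul, dotProduct] using hcol j

lemma adjugate_row_const {n : ℕ} (L : Matrix (Fin (n+1)) (Fin (n+1)) ℝ)
    (hcol : ∀ j, ∑ i, L i j = 0)
    (hminor : ∀ i : Fin (n+1), (L.submatrix i.succAbove i.succAbove).det ≠ 0)
    (i j : Fin (n+1)) : L.adjugate i j = L.adjugate i i := by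
  classical
  have hadjL : L.adjugate * L = 0 := by
    rw [Matrix.adjugate_mul, det_eq_zero_of_col L hcol, zero_smul]
  set w : Fin (n+1) → ℝ := fun a => L.adjugate i a - L.adjugate i i with hw
  have hwi : w i = 0 := by simp [hw]
  have hwL : ∀ c, ∑ a, w a * L a c = 0 := by
    intro c
    have h1 : ∑ a, L.adjugate i a * L a c = 0 := by
      have := congrFun (congrFun hadjL i) c
      simpa [Matrix.mul_apply] using this
    have h2 : ∑ a, L.adjugate i i * L a c = 0 := by
      rw [← Finset.mul_sum, hcol c, mul_zero]
    simp only [hw, sub_mul]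
    rw [Finset.sum_sub_distrib, h1, h2, sub_zero]
  set x : Fin n → ℝ := fun k => w (i.succAbove k) with hx
  have hvec : x ᵥ* (L.submatrix i.succAbove i.succAbove) = 0 := by
    funext c
    have h3 := hwL (i.succAbove c)
    rw [Fin.sum_univ_succAbove _ i, hwi, zero_mul, zero_add] at h3
    simpa [Matrix.vecMul, dotProduct, Matrix.submatrix_apply, hx] using h3
  have hx0 : x = 0 := by
    by_contra hne
    exact hminor i (Matrix.exists_vecMul_eq_zero_iff.mp ⟨x, hne, hvec⟩)
  by_cases hji : j = i
  · rw [hji]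
  · obtain ⟨k, rfl⟩ := Fin.exists_succAbove_eq hji
    have : x k = 0 := by rw [hx0]; rfl
    have : w (i.succAbove k) = 0 := this
    simp only [hw] at this
    linarith

lemma det_expand {m : ℕ} (D N : Matrix (Fin m) (Fin m) ℝ) (t : ℝ) :
    (t • D + N).det
      = ∑ S : Finset (Fin m),
          t ^ S.card * (Matrix.of (S.piecewise (fun a => D a) (fun a => N a))).det := by
  classical
  have h1 : (t • D + N : Matrix (Fin m) (Fin m) ℝ)
      = Matrix.of ((fun a => t • D a) + (fun a => N a)) := by
    ext a b; simp
  rw [h1]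
  have h2 := Matrix.detRowAlternating.toMultilinearMap.map_add_univ
    (fun a => t • D a) (fun a => N a)
  simp only [AlternatingMap.coe_multilinearMap] at h2
  have h3 : (Matrix.of ((fun a => t • D a) + (fun a => N a))).det
      = Matrix.detRowAlternating ((fun a => t • D a) + (fun a => N a)) := rfl
  rw [h3, h2]
  apply Finset.sum_congr rfl
  intro S _
  have h4 := Matrix.detRowAlternating.toMultilinearMap.map_piecewise_smul
    (fun _ : Fin m => t) (S.piecewise (fun a => D a) (fun a => N a)) S
  simp only [AlternatingMap.coe_multilinearMap] at h4
  have h5 : S.piecewise (fun i => (fun _ : Fin m => t) i • S.piecewise (fun a => D a) (fun a => N a) i)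
        (S.piecewise (fun a => D a) (fun a => N a))
      = S.piecewise (fun a => t • D a) (fun a => N a) := by
    funext a
    by_cases h : a ∈ S
    · simp [Finset.piecewise_eq_of_mem _ _ _ h]
    · simp [Finset.piecewise_eq_of_notMem _ _ _ h]
  rw [h5] at h4
  rw [h4, Finset.prod_const]
  rfl

lemma exists_gfun {n : ℕ} (L : Matrix (Fin (n+1)) (Fin (n+1)) ℝ)
    (hcol : ∀ j, ∑ i, L i j = 0) (γ : Fin (n+1) → ℝ) :
    ∃ g : ℝ → ℝ, Continuous g ∧
      (∀ t : ℝ, (t • Matrix.diagonal γ + (-L)).det = t * g t) ∧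
      g 0 = ∑ k, γ k * (-L).adjugate k k := by
  classical
  set D := Matrix.diagonal γ with hD
  set c : Finset (Fin (n+1)) → ℝ :=
    fun S => (Matrix.of (S.piecewise (fun a => D a) (fun a => (-L) a))).det with hc
  have hcempty : c ∅ = 0 := by
    have h1 : Matrix.of ((∅ : Finset (Fin (n+1))).piecewise (fun a => D a) (fun a => (-L) a))
        = -L := by
      ext a b
      simp [Finset.piecewise_empty]
    rw [hc]
    simp only [h1]
    rw [Matrix.det_neg, det_eq_zero_of_col L hcol, mul_zero]
  have hcsingle : ∀ k, c {k} = γ k * (-L).adjugate k k := by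
    intro k
    have h1 : Matrix.of (({k} : Finset (Fin (n+1))).piecewise (fun a => D a) (fun a => (-L) a))
        = Matrix.updateRow (-L) k (Pi.single k (γ k)) := by
      ext a b
      rw [Finset.piecewise_singleton]
      by_cases h : a = k
      · subst h
        simp only [Matrix.of_apply, Function.update_self, Matrix.updateRow_self]
        rw [hD]
        rw [Matrix.diagonal_apply, Pi.single_apply]
        by_cases hb : a = b
        · subst hb; simp
        · rw [if_neg hb, if_neg (Ne.symm hb)]
      · simp only [Matrix.of_apply, Function.update_of_ne h, Matrix.updateRow_ne h]
    have h2 : (Pi.single k (γ k) : Fin (n+1) → ℝ) = γ k • (Pi.single k (1:ℝ) : Fin (n+1) → ℝ) := by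
      funext j
      simp only [Pi.smul_apply, Pi.single_apply, smul_eq_mul]
      by_cases hj : j = k <;> simp [hj]
    rw [hc]
    simp only [h1, h2]
    rw [Matrix.det_updateRow_smul, ← Matrix.adjugate_apply]
  set g : ℝ → ℝ := fun t =>
    ∑ S ∈ Finset.univ.filter (fun S : Finset (Fin (n+1)) => S.Nonempty),
      t ^ (S.card - 1) * c S with hg
  have hgcont : Continuous g := by
    apply continuous_finset_sum
    intro S _
    exact (continuous_pow _).mul continuous_const
  refine ⟨g, hgcont, ?_, ?_⟩
  · intro t
    rw [det_expand]
    have hsplit := Finset.sum_filter_add_sum_filter_not Finset.univ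
      (fun S : Finset (Fin (n+1)) => S.Nonempty) (fun S => t ^ S.card * c S)
    have hnot : ∑ S ∈ Finset.univ.filter
        (fun S : Finset (Fin (n+1)) => ¬S.Nonempty), t ^ S.card * c S = 0 := by
      apply Finset.sum_eq_zero
      intro S hS
      have : S = ∅ := Finset.not_nonempty_iff_eq_empty.mp (Finset.mem_filter.mp hS).2
      subst this
      rw [hcempty, mul_zero]
    have hmul : t * g t = ∑ S ∈ Finset.univ.filter
        (fun S : Finset (Fin (n+1)) => S.Nonempty), t ^ S.card * c S := by
      rw [hg]
      rw [Finset.mul_sum]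
      apply Finset.sum_congr rfl
      intro S hS
      have hcard : 1 ≤ S.card := Finset.card_pos.mpr (Finset.mem_filter.mp hS).2
      rw [← mul_assoc, ← pow_succ']
      congr 2
      omega
    rw [hmul, ← hsplit, hnot, add_zero]
  · show (∑ S ∈ Finset.univ.filter (fun S : Finset (Fin (n+1)) => S.Nonempty),
        (0:ℝ) ^ (S.card - 1) * c S) = ∑ k, γ k * (-L).adjugate k k
    have hsplit := Finset.sum_filter_add_sum_filter_not
      (Finset.univ.filter (fun S : Finset (Fin (n+1)) => S.Nonempty))
      (fun S : Finset (Fin (n+1)) => S.card = 1)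
      (fun S => (0:ℝ) ^ (S.card - 1) * c S)
    have hnot : ∑ S ∈ (Finset.univ.filter
          (fun S : Finset (Fin (n+1)) => S.Nonempty)).filter
          (fun S => ¬S.card = 1), (0:ℝ) ^ (S.card - 1) * c S = 0 := by
      apply Finset.sum_eq_zero
      intro S hS
      simp only [Finset.mem_filter] at hS
      have h1 : 1 ≤ S.card := Finset.card_pos.mpr hS.1.2
      have h2 : S.card - 1 ≠ 0 := by omega
      rw [zero_pow h2, zero_mul]
    have hone : ∑ S ∈ (Finset.univ.filter
          (fun S : Finset (Fin (n+1)) => S.Nonempty)).filter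
          (fun S => S.card = 1), (0:ℝ) ^ (S.card - 1) * c S
        = ∑ k, γ k * (-L).adjugate k k := by
      have hset : (Finset.univ.filter
          (fun S : Finset (Fin (n+1)) => S.Nonempty)).filter (fun S => S.card = 1)
          = (Finset.univ : Finset (Fin (n+1))).powersetCard 1 := by
        ext S
        simp only [Finset.mem_filter, Finset.mem_powersetCard, Finset.mem_univ, true_and]
        constructor
        · rintro ⟨-, h⟩; exact ⟨Finset.subset_univ S, h⟩
        · rintro ⟨-, h⟩; exact ⟨Finset.card_pos.mp (by omega), h⟩
      rw [hset, Finset.powersetCard_one, Finset.sum_map]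
      apply Finset.sum_congr rfl
      intro k _
      simp only [Function.Embedding.coeFn_mk, Finset.card_singleton]
      rw [pow_zero, one_mul, hcsingle k]
    rw [← hsplit, hnot, add_zero, hone]

lemma rank_one_of_const_col {m : ℕ} (A : Matrix (Fin m) (Fin m) ℝ) (v : Fin m → ℝ)
    (hA : ∀ i j, A i j = v i) (hv : v ≠ 0) : A.rank = 1 := by
  classical
  have hAv : A = Matrix.vecMulVec v (fun _ => 1) := by
    ext i j; simp [Matrix.vecMulVec_apply, hA]
  have hle : A.rank ≤ 1 := by
    rw [hAv, Matrix.vecMulVec_eq Unit]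
    refine le_trans (Matrix.rank_mul_le_left _ _) ?_
    simpa using Matrix.rank_le_card_width (Matrix.replicateCol Unit v)
  have hne : A.rank ≠ 0 := by
    intro h0
    have hfin : Module.finrank ℝ (LinearMap.range A.mulVecLin) = 0 := h0
    have hbot : LinearMap.range A.mulVecLin = ⊥ :=
      Submodule.finrank_eq_zero.mp hfin
    obtain ⟨i, hi⟩ := Function.ne_iff.mp hv
    have h1 : A *ᵥ (fun _ => 1) = 0 := by
      have : A.mulVecLin (fun _ => 1) ∈ LinearMap.range A.mulVecLin :=
        LinearMap.mem_range_self _ _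
      rw [hbot] at this
      simpa [Matrix.mulVecLin] using this
    have h2 := congrFun h1 i
    simp only [Matrix.mulVec, dotProduct, Pi.zero_apply] at h2
    have h3 : ∑ j, A i j * 1 = (m : ℝ) * v i := by
      simp [hA, Finset.sum_const, mul_comm]
    rw [h3] at h2
    have hm : (0:ℝ) < m := by exact_mod_cast i.pos
    simp only [Pi.zero_apply] at hi
    exact hi ((mul_eq_zero.mp h2).resolve_left (ne_of_gt hm))
  omega

/-- For an essentially nonnegative, irreducible `L` with zero column sums and
`D = diag(γ)` with `γ_i > 0`, the inverse `V(d)⁻¹ = (D − d·L)⁻¹` converges entrywise as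
`d → ∞` to `V∞⁻¹ = (1/Σ γ_i·C_{ii})·adj(L)`, which is entrywise strictly positive and has
rank one. -/
theorem Vinv_tendsto_atTop {n : ℕ} (hn : 1 ≤ n)
    (L : Matrix (Fin (n+1)) (Fin (n+1)) ℝ)
    (hess : ∀ i j, i ≠ j → 0 ≤ L i j)
    (hirr : IsIrreducibleMatrix L)
    (hcol : ∀ j, ∑ i, L i j = 0)
    (γ : Fin (n+1) → ℝ) (hγ : ∀ i, 0 < γ i)
    (hV : ∀ d : ℝ, 0 ≤ d → IsUnit (Matrix.diagonal γ - d • L)) :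
    (∀ i j, Filter.Tendsto (fun d : ℝ => ((Matrix.diagonal γ - d • L)⁻¹) i j)
      Filter.atTop
      (nhds (((1 / ∑ k, γ k * cofactor L k k) • L.adjugate) i j))) ∧
    (∀ i j, 0 < ((1 / ∑ k, γ k * cofactor L k k) • L.adjugate) i j) ∧
    ((1 / ∑ k, γ k * cofactor L k k) • L.adjugate).rank = 1 := by
  classical
  have hminor := minor_det_ne_zero L hess hirr hcol
  have hpos := neg_minor_det_pos L hess hirr hcol
  set ε : ℝ := (-1 : ℝ) ^ n with hεdef
  have hε : ε * ε = 1 := by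
    rw [hεdef, ← pow_add]
    exact Even.neg_one_pow ⟨n, rfl⟩
  have hεne : ε ≠ 0 := by
    intro h
    rw [h, mul_zero] at hε
    norm_num at hε
  have hdetM : ∀ i : Fin (n+1), (L.submatrix i.succAbove i.succAbove).det
      = ε * (-(L.submatrix i.succAbove i.succAbove)).det := by
    intro i
    rw [Matrix.det_neg]
    simp only [Fintype.card_fin]
    rw [← mul_assoc, ← hεdef, hε, one_mul]
  set Q : ℝ := ∑ k, γ k * (-(L.submatrix k.succAbove k.succAbove)).det with hQdef
  have hQpos : 0 < Q := by
    apply Finset.sum_pos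
    · intro k _
      exact mul_pos (hγ k) (hpos k)
    · exact ⟨0, Finset.mem_univ 0⟩
  have hq : (∑ k, γ k * cofactor L k k) = ε * Q := by
    rw [hQdef, Finset.mul_sum]
    apply Finset.sum_congr rfl
    intro k _
    rw [cofactor_diag_eq, hdetM k]
    ring
  have hrowconst := adjugate_row_const L hcol hminor
  have hone : ∀ a : ℝ, (1 / (ε * Q)) * (ε * a) = a / Q := by
    intro a
    field_simp
  have hone2 : ∀ a : ℝ, ε * a / Q = 1 / (ε * Q) * a := by
    intro a
    field_simp
    have hE : ((-1:ℝ))^(n*2) = 1 := by rw [mul_comm, pow_mul]; norm_num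
    linear_combination a * hE
  have hentry : ∀ i j, ((1 / ∑ k, γ k * cofactor L k k) • L.adjugate) i j
      = (-(L.submatrix i.succAbove i.succAbove)).det / Q := by
    intro i j
    rw [Matrix.smul_apply, smul_eq_mul, hq, hrowconst i j, adjugate_diag_eq, hdetM i, hone]
  obtain ⟨g, hgcont, hgdet, hg0⟩ := exists_gfun L hcol γ
  have hadjneg : (-L).adjugate = ε • L.adjugate := by
    rw [← neg_one_smul ℝ L, Matrix.adjugate_smul]
    congr 1
    simp [hεdef, Fintype.card_fin]
  have hg0' : g 0 = Q := by
    rw [hg0, hQdef]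
    apply Finset.sum_congr rfl
    intro k _
    rw [adjugate_diag_eq]
    have : (-L).submatrix k.succAbove k.succAbove
        = -(L.submatrix k.succAbove k.succAbove) := rfl
    rw [this]
  refine ⟨?_, ?_, ?_⟩
  · intro i j
    set D := Matrix.diagonal γ with hD
    set h : ℝ → ℝ := fun t => ((t • D + (-L)).adjugate) i j / g t with hh
    have hBcont : Continuous fun t : ℝ => (t • D + (-L)) :=
      (continuous_id.smul continuous_const).add continuous_const
    have hnum : Continuous fun t : ℝ => ((t • D + (-L)).adjugate) i j :=
      hBcont.matrix_adjugate.matrix_elem i j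
    have hconth : ContinuousAt h 0 := by
      apply ContinuousAt.div hnum.continuousAt hgcont.continuousAt
      rw [hg0']
      exact ne_of_gt hQpos
    have hh0 : h 0 = ((1 / ∑ k, γ k * cofactor L k k) • L.adjugate) i j := by
      rw [hh]
      have h1 : (0:ℝ) • D + (-L) = -L := by simp
      simp only [h1, hg0', hadjneg, Matrix.smul_apply, smul_eq_mul]
      rw [hq]
      exact hone2 _
    have hkey : ∀ d : ℝ, 0 < d → ((D - d • L)⁻¹) i j = h d⁻¹ := by
      intro d hd
      have hdne : d ≠ 0 := ne_of_gt hd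
      have h1 : D - d • L = d • (d⁻¹ • D + (-L)) := by
        rw [smul_add, smul_smul, mul_inv_cancel₀ hdne, one_smul, smul_neg, sub_eq_add_neg]
      rw [h1, Matrix.inv_def, Matrix.smul_apply, smul_eq_mul, Ring.inverse_eq_inv]
      rw [Matrix.det_smul, Matrix.adjugate_smul]
      simp only [Fintype.card_fin]
      rw [hgdet d⁻¹]
      have h2 : d ^ (n+1) * (d⁻¹ * g d⁻¹) = d ^ n * g d⁻¹ := by
        rw [pow_succ]
        field_simp
      rw [h2, Matrix.smul_apply, smul_eq_mul, mul_inv]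
      have h3 : (d ^ (n+1) - d ^ (n+1)) = 0 := by ring
      have hdn : (d : ℝ) ^ n ≠ 0 := pow_ne_zero n hdne
      rw [hh]
      show _ = (d⁻¹ • D + -L).adjugate i j / g d⁻¹
      simp only [Nat.add_sub_cancel]
      have h4 : (d ^ n)⁻¹ * (g d⁻¹)⁻¹ * (d ^ n * (d⁻¹ • D + -L).adjugate i j)
          = ((d ^ n)⁻¹ * d ^ n) * ((g d⁻¹)⁻¹ * (d⁻¹ • D + -L).adjugate i j) := by ring
      rw [h4, inv_mul_cancel₀ hdn, one_mul, div_eq_mul_inv, mul_comm]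
    rw [← hh0]
    apply Filter.Tendsto.congr' _ (hconth.tendsto.comp tendsto_inv_atTop_zero)
    filter_upwards [eventually_gt_atTop (0:ℝ)] with d hd
    exact (hkey d hd).symm
  · intro i j
    rw [hentry i j]
    exact div_pos (hpos i) hQpos
  · apply rank_one_of_const_col _ (fun i => (-(L.submatrix i.succAbove i.succAbove)).det / Q)
    · intro i j
      exact hentry i j
    · intro h
      have := congrFun h 0
      simp only [Pi.zero_apply] at this
      exact absurd this (ne_of_gt (div_pos (hpos 0) hQpos))
end

section
/- Let n ≥ 2 and let L be an n×n real matrix that is essentially nonnegative (all off-diagonal entries nonnegative), irreducible, and has all column sums equal to zero. Let β_i > 0 and γ_i > 0 for i = 1,…,n, set F = diag(β_1,…,β_n), D = diag(γ_1,…,γ_n), V(d) = D − d·L, and R0(d) = ρ(F·V(d)⁻¹). Let C_{ii} denote the diagonal cofactors of L. Then lim_{d→∞} R0(d) = (Σ_{i=1}^n β_i·C_{ii}) / (Σ_{i=1}^n γ_i·C_{ii}). -/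
open Matrix Filter Set Topology

section Aux

variable {n : ℕ} {L : Matrix (Fin (n+1)) (Fin (n+1)) ℝ}

/-- Any left-kernel vector of `L` is constant. -/
lemma left_ker_const (hess : ∀ i j, i ≠ j → 0 ≤ L i j) (hirr : IsIrreducibleMatrix L)
    (hcol : ∀ j, ∑ i, L i j = 0) {x : Fin (n+1) → ℝ} (hx : x ᵥ* L = 0) :
    ∀ k l, x k = x l := by
  obtain ⟨i₀, -, hmax⟩ := Finset.exists_max_image Finset.univ x ⟨0, Finset.mem_univ 0⟩
  have hmax' : ∀ j, x j ≤ x i₀ := fun j => hmax j (Finset.mem_univ j)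
  set S : Set (Fin (n+1)) := {i | x i = x i₀} with hS
  have hi₀ : i₀ ∈ S := rfl
  have key : ∀ i ∈ S, ∀ j, j ∉ S → L j i = 0 := by
    intro i hi j hj
    have hxi : x i = x i₀ := hi
    have hsum : ∑ k, (x k - x i) * L k i = 0 := by
      have h1 : ∑ k, x k * L k i = 0 := congrFun hx i
      have h2 : ∑ k, x i * L k i = 0 := by
        rw [← Finset.mul_sum, hcol i, mul_zero]
      calc ∑ k, (x k - x i) * L k i = ∑ k, (x k * L k i - x i * L k i) := by
            simp [sub_mul]
        _ = 0 := by rw [Finset.sum_sub_distrib, h1, h2, sub_zero]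
    have hterm : ∀ k ∈ Finset.univ, (x k - x i) * L k i ≤ 0 := by
      intro k _
      rcases eq_or_ne k i with rfl | hk
      · simp
      · exact mul_nonpos_of_nonpos_of_nonneg (by linarith [hmax' k, hxi]) (hess k i hk)
    have := (Finset.sum_eq_zero_iff_of_nonpos hterm).1 hsum j (Finset.mem_univ j)
    have hxj : x j < x i := by
      rcases lt_or_eq_of_le (hmax' j) with h | h
      · rw [hxi]; exact h
      · exact absurd h hj
    have : L j i = 0 := by
      rcases mul_eq_zero.1 this with h | h
      · exfalso; linarith
      · exact h
    exact this
  have hSuniv : S = Set.univ := by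
    by_contra hne
    have hc1 : Sᶜ.Nonempty := by
      rcases Set.ne_univ_iff_exists_notMem S |>.1 hne with ⟨a, ha⟩
      exact ⟨a, ha⟩
    have hc2 : Sᶜ ≠ Set.univ := by
      intro h
      have : i₀ ∈ Sᶜ := h ▸ Set.mem_univ i₀
      exact this hi₀
    obtain ⟨a, ha, b, hb, hab⟩ := hirr Sᶜ hc1 hc2
    have hbS : b ∈ S := by simpa using hb
    exact hab (key b hbS a ha)
  intro k l
  have hk : x k = x i₀ := by have := hSuniv ▸ Set.mem_univ k; exact this
  have hl : x l = x i₀ := by have := hSuniv ▸ Set.mem_univ l; exact this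
  rw [hk, hl]

/-- A nonzero nonnegative kernel vector is strictly positive. -/
lemma pos_of_nonneg_ker (hess : ∀ i j, i ≠ j → 0 ≤ L i j) (hirr : IsIrreducibleMatrix L)
    {p : Fin (n+1) → ℝ} (hp : L *ᵥ p = 0) (hp0 : ∀ i, 0 ≤ p i) (hpne : p ≠ 0) :
    ∀ i, 0 < p i := by
  set S : Set (Fin (n+1)) := {i | p i = 0} with hSdef
  have hSne : S = ∅ := by
    by_contra hne
    have hSnonempty : S.Nonempty := Set.nonempty_iff_ne_empty.2 hne
    have hSneuniv : S ≠ Set.univ := by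
      intro h
      apply hpne
      funext i
      have : i ∈ S := h ▸ Set.mem_univ i
      exact this
    obtain ⟨a, ha, b, hb, hab⟩ := hirr S hSnonempty hSneuniv
    have hpa : p a = 0 := ha
    have hpb : 0 < p b := lt_of_le_of_ne (hp0 b) (fun h => hb h.symm)
    have hsum : ∑ j, L a j * p j = 0 := congrFun hp a
    have hterm : ∀ j ∈ Finset.univ, 0 ≤ L a j * p j := by
      intro j _
      rcases eq_or_ne a j with rfl | hj
      · rw [hpa, mul_zero]
      · exact mul_nonneg (hess a j hj) (hp0 j)
    have := (Finset.sum_eq_zero_iff_of_nonneg hterm).1 hsum b (Finset.mem_univ b)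
    rcases mul_eq_zero.1 this with h | h
    · exact hab h
    · linarith
  intro i
  have : i ∉ S := by rw [hSne]; exact Set.notMem_empty i
  exact lt_of_le_of_ne (hp0 i) (fun h => this h.symm)

/-- The entrywise absolute value of a kernel vector is again in the kernel. -/
lemma abs_ker (hess : ∀ i j, i ≠ j → 0 ≤ L i j) (hcol : ∀ j, ∑ i, L i j = 0)
    {p : Fin (n+1) → ℝ} (hp : L *ᵥ p = 0) :
    L *ᵥ (fun i => |p i|) = 0 := by
  have hdiag : ∀ i, L i i ≤ 0 := by
    intro i
    have h1 : L i i + ∑ j ∈ Finset.univ.erase i, L j i = 0 := by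
      rw [Finset.add_sum_erase Finset.univ (fun j => L j i) (Finset.mem_univ i)]; exact hcol i
    have h2 : 0 ≤ ∑ j ∈ Finset.univ.erase i, L j i :=
      Finset.sum_nonneg fun j hj => hess j i (Finset.ne_of_mem_erase hj)
    linarith
  set q : Fin (n+1) → ℝ := L *ᵥ (fun i => |p i|) with hq
  have hq0 : ∀ i, 0 ≤ q i := by
    intro i
    have hsplit : q i = L i i * |p i| + ∑ j ∈ Finset.univ.erase i, L i j * |p j| := by
      rw [hq]
      show ∑ j, L i j * |p j| = _
      rw [← Finset.add_sum_erase Finset.univ (fun j => L i j * |p j|) (Finset.mem_univ i)]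
    have hpi : L i i * p i + ∑ j ∈ Finset.univ.erase i, L i j * p j = 0 := by
      have h0 : ∑ j, L i j * p j = 0 := congrFun hp i
      rw [← Finset.add_sum_erase Finset.univ (fun j => L i j * p j) (Finset.mem_univ i)] at h0
      exact h0
    have habs : |L i i * p i| ≤ ∑ j ∈ Finset.univ.erase i, L i j * |p j| := by
      have : L i i * p i = -∑ j ∈ Finset.univ.erase i, L i j * p j := by linarith
      rw [this, abs_neg]
      refine le_trans (Finset.abs_sum_le_sum_abs _ _) ?_
      apply Finset.sum_le_sum
      intro j hj
      rw [abs_mul, abs_of_nonneg (hess i j (Finset.ne_of_mem_erase hj).symm)]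
    have hLii : L i i * |p i| = -|L i i * p i| := by
      rw [abs_mul, abs_of_nonpos (hdiag i)]; ring
    rw [hsplit, hLii]
    linarith
  have hqsum : ∑ i, q i = 0 := by
    rw [hq]
    show ∑ i, ∑ j, L i j * |p j| = 0
    rw [Finset.sum_comm]
    apply Finset.sum_eq_zero
    intro j _
    rw [← Finset.sum_mul, hcol j, zero_mul]
  funext i
  exact (Finset.sum_eq_zero_iff_of_nonneg (fun i _ => hq0 i)).1 hqsum i (Finset.mem_univ i)


lemma det_L_zero (hcol : ∀ j, ∑ i, L i j = 0) : L.det = 0 := by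
  rw [← Matrix.exists_vecMul_eq_zero_iff]
  refine ⟨fun _ => 1, ?_, ?_⟩
  · intro h
    have := congrFun h 0
    simp at this
  · funext j
    show ∑ i, (1:ℝ) * L i j = 0
    simp [hcol j]

lemma adj_row_const (hess : ∀ i j, i ≠ j → 0 ≤ L i j) (hirr : IsIrreducibleMatrix L)
    (hcol : ∀ j, ∑ i, L i j = 0) :
    ∀ i k l, adjugate L i k = adjugate L i l := by
  intro i
  apply left_ker_const hess hirr hcol
  funext k
  show ∑ j, adjugate L i j * L j k = 0
  have : (adjugate L * L) i k = 0 := by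
    rw [Matrix.adjugate_mul, det_L_zero hcol]
    simp
  rw [← this, Matrix.mul_apply]

lemma mulVec_u_eq_zero (hess : ∀ i j, i ≠ j → 0 ≤ L i j) (hirr : IsIrreducibleMatrix L)
    (hcol : ∀ j, ∑ i, L i j = 0) :
    L *ᵥ (fun i => adjugate L i i) = 0 := by
  funext i
  show ∑ j, L i j * adjugate L j j = 0
  have h1 : ∑ j, L i j * adjugate L j j = ∑ j, L i j * adjugate L j i :=
    Finset.sum_congr rfl fun j _ => by rw [adj_row_const hess hirr hcol j j i]
  rw [h1]
  have : (L * adjugate L) i i = 0 := by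
    rw [Matrix.mul_adjugate, det_L_zero hcol]
    simp
  rw [← this, Matrix.mul_apply]

lemma u_zero_ne (hess : ∀ i j, i ≠ j → 0 ≤ L i j) (hirr : IsIrreducibleMatrix L)
    (hcol : ∀ j, ∑ i, L i j = 0) :
    adjugate L 0 0 ≠ 0 := by
  have hadj : adjugate L 0 0 = (L.submatrix Fin.succ Fin.succ).det := by
    rw [Matrix.adjugate_fin_succ_eq_det_submatrix]
    simp
  rw [hadj]
  intro hdet
  obtain ⟨y, hy0, hy⟩ := Matrix.exists_mulVec_eq_zero_iff.2 hdet
  set x : Fin (n+1) → ℝ := Fin.cons 0 y with hxdef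
  have hker : L *ᵥ x = 0 := by
    have hsucc : ∀ k : Fin n, (L *ᵥ x) k.succ = 0 := by
      intro k
      have : (L *ᵥ x) k.succ = ∑ j, L k.succ j * x j := rfl
      rw [this, Fin.sum_univ_succ]
      have h0 : x 0 = 0 := rfl
      rw [h0, mul_zero, zero_add]
      have : ∑ m : Fin n, L k.succ m.succ * x m.succ
          = (L.submatrix Fin.succ Fin.succ *ᵥ y) k := by
        apply Finset.sum_congr rfl
        intro m _
        congr 1
      rw [this, hy]
      rfl
    have hsum : ∑ i, (L *ᵥ x) i = 0 := by
      show ∑ i, ∑ j, L i j * x j = 0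
      rw [Finset.sum_comm]
      apply Finset.sum_eq_zero
      intro j _
      rw [← Finset.sum_mul, hcol j, zero_mul]
    have h0 : (L *ᵥ x) 0 = 0 := by
      rw [Fin.sum_univ_succ] at hsum
      have : ∑ k : Fin n, (L *ᵥ x) k.succ = 0 :=
        Finset.sum_eq_zero fun k _ => hsucc k
      rw [this, add_zero] at hsum
      exact hsum
    funext i
    rcases Fin.eq_zero_or_eq_succ i with rfl | ⟨k, rfl⟩
    · exact h0
    · exact hsucc k
  have hxne : (fun i => |x i|) ≠ 0 := by
    intro h
    apply hy0
    funext k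
    have := congrFun h k.succ
    simp only [Pi.zero_apply, abs_eq_zero] at this
    have hx : x k.succ = y k := rfl
    rw [← hx, this]
    rfl
  have hpos := pos_of_nonneg_ker hess hirr (abs_ker hess hcol hker)
    (fun i => abs_nonneg _) hxne
  have := hpos 0
  have h0 : x 0 = 0 := rfl
  rw [h0] at this
  simp at this

lemma u_sign (hess : ∀ i j, i ≠ j → 0 ≤ L i j) (hirr : IsIrreducibleMatrix L)
    (hcol : ∀ j, ∑ i, L i j = 0) :
    (∀ i, 0 < adjugate L i i) ∨ (∀ i, adjugate L i i < 0) := by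
  set u : Fin (n+1) → ℝ := fun i => adjugate L i i with hu
  have hku : L *ᵥ u = 0 := mulVec_u_eq_zero hess hirr hcol
  have hka : L *ᵥ (fun i => |u i|) = 0 := abs_ker hess hcol hku
  have hu0 : u 0 ≠ 0 := u_zero_ne hess hirr hcol
  by_cases hv : (fun i => |u i| - u i) = 0
  · left
    have hueq : ∀ i, u i = |u i| := fun i => by
      have := congrFun hv i; simp only [Pi.zero_apply] at this; linarith
    refine pos_of_nonneg_ker hess hirr hku (fun i => by show (0:ℝ) ≤ u i; rw [hueq i]; exact abs_nonneg _) ?_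
    intro h; exact hu0 (congrFun h 0)
  · by_cases hw : (fun i => |u i| + u i) = 0
    · right
      have hueq : ∀ i, u i = -|u i| := fun i => by
        have := congrFun hw i; simp only [Pi.zero_apply] at this; linarith
      have hneg : ∀ i, 0 < -u i := by
        refine pos_of_nonneg_ker hess hirr ?_ (fun i => by show (0:ℝ) ≤ -u i; rw [hueq i]; simp [abs_nonneg]) ?_
        · have : (fun i => -u i) = (-1 : ℝ) • u := by funext i; simp
          rw [this, Matrix.mulVec_smul, hku, smul_zero]
        · intro h
          have := congrFun h 0
          simp only [Pi.zero_apply, neg_eq_zero] at this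
          exact hu0 this
      exact fun i => by linarith [hneg i]
    · exfalso
      have hkv : L *ᵥ (fun i => |u i| - u i) = 0 := by
        have : (fun i => |u i| - u i) = (fun i => |u i|) - u := rfl
        rw [this, Matrix.mulVec_sub, hka, hku, sub_zero]
      have hkw : L *ᵥ (fun i => |u i| + u i) = 0 := by
        have : (fun i => |u i| + u i) = (fun i => |u i|) + u := rfl
        rw [this, Matrix.mulVec_add, hka, hku, add_zero]
      have hv' := pos_of_nonneg_ker hess hirr hkv (fun i => by linarith [le_abs_self (u i)]) hv 0
      have hw' := pos_of_nonneg_ker hess hirr hkw (fun i => by linarith [neg_abs_le (u i)]) hw 0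
      rcases abs_choice (u 0) with h | h <;> rw [h] at hv' hw' <;> linarith


/-! ### Spectral lemmas -/

lemma my_charpoly_eval {m : Type*} [Fintype m] [DecidableEq m] (M : Matrix m m ℂ) (t : ℂ) :
    M.charpoly.eval t = (t • (1 : Matrix m m ℂ) - M).det := by
  rw [Matrix.charpoly, eval_det, Matrix.matPolyEquiv_charmatrix]
  rw [Polynomial.eval_sub, Polynomial.eval_X, Polynomial.eval_C]
  rw [Matrix.scalar_apply, Matrix.smul_one_eq_diagonal]

lemma root_abs_le {A : Matrix (Fin (n+1)) (Fin (n+1)) ℝ} {b : ℝ}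
    (hb : ∀ j, ∑ i, |A i j| ≤ b) {μ : ℂ}
    (hμ : ((A.map Complex.ofReal).charpoly).IsRoot μ) : ‖μ‖ ≤ b := by
  have hdet : (μ • (1 : Matrix (Fin (n+1)) (Fin (n+1)) ℂ) - A.map Complex.ofReal).det = 0 := by
    rw [← my_charpoly_eval]; exact hμ
  obtain ⟨v, hv0, hv⟩ := Matrix.exists_vecMul_eq_zero_iff.2 hdet
  have key : ∀ j, μ * v j = ∑ i, v i * (A.map Complex.ofReal) i j := by
    intro j
    have h1 : ∑ i, v i * (μ • (1 : Matrix (Fin (n+1)) (Fin (n+1)) ℂ) - A.map Complex.ofReal) i j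
        = 0 := congrFun hv j
    have h2 : ∑ i, v i * (μ • (1 : Matrix (Fin (n+1)) (Fin (n+1)) ℂ)) i j = μ * v j := by
      simp [Matrix.smul_apply, Matrix.one_apply, mul_ite, Finset.sum_ite_eq, mul_comm]
    calc μ * v j = ∑ i, v i * (μ • (1 : Matrix (Fin (n+1)) (Fin (n+1)) ℂ)) i j
          - ∑ i, v i * (A.map Complex.ofReal) i j
          + ∑ i, v i * (A.map Complex.ofReal) i j := by rw [h2]; ring
      _ = ∑ i, v i * (A.map Complex.ofReal) i j := by
          rw [← Finset.sum_sub_distrib]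
          have : ∑ i, (v i * (μ • (1 : Matrix (Fin (n+1)) (Fin (n+1)) ℂ)) i j
              - v i * (A.map Complex.ofReal) i j) = 0 := by
            rw [← h1]
            apply Finset.sum_congr rfl
            intro i _
            rw [Matrix.sub_apply, mul_sub]
          rw [this, zero_add]
  obtain ⟨j₀, -, hmax⟩ := Finset.exists_max_image Finset.univ (fun j => ‖v j‖)
    ⟨0, Finset.mem_univ 0⟩
  have hmax' : ∀ j, ‖v j‖ ≤ ‖v j₀‖ := fun j => hmax j (Finset.mem_univ j)
  have hj₀pos : 0 < ‖v j₀‖ := by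
    rcases (norm_nonneg (v j₀)).lt_or_eq with h | h
    · exact h
    · exfalso
      apply hv0
      funext i
      have : ‖v i‖ ≤ 0 := h ▸ hmax' i
      have := le_antisymm this (norm_nonneg _)
      simpa using this
  have hcalc : ‖μ‖ * ‖v j₀‖ ≤ b * ‖v j₀‖ := by
    calc ‖μ‖ * ‖v j₀‖ = ‖μ * v j₀‖ := (norm_mul _ _).symm
      _ = ‖∑ i, v i * (A.map Complex.ofReal) i j₀‖ := by rw [key j₀]
      _ ≤ ∑ i, ‖v i * (A.map Complex.ofReal) i j₀‖ :=
          norm_sum_le _ _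
      _ = ∑ i, ‖v i‖ * |A i j₀| := by
          apply Finset.sum_congr rfl
          intro i _
          rw [norm_mul]
          congr 1
          show ‖(A i j₀ : ℂ)‖ = _
          rw [Complex.norm_real, Real.norm_eq_abs]
      _ ≤ ∑ i, ‖v j₀‖ * |A i j₀| := by
          apply Finset.sum_le_sum
          intro i _
          exact mul_le_mul_of_nonneg_right (hmax' i) (abs_nonneg _)
      _ = (∑ i, |A i j₀|) * ‖v j₀‖ := by rw [← Finset.mul_sum]; ring
      _ ≤ b * ‖v j₀‖ :=
          mul_le_mul_of_nonneg_right (hb j₀) (norm_nonneg _)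
  exact le_of_mul_le_mul_right hcalc hj₀pos

lemma specSet_nonempty (A : Matrix (Fin (n+1)) (Fin (n+1)) ℝ) :
    {x : ℝ | ∃ μ : ℂ, ((A.map Complex.ofReal).charpoly).IsRoot μ ∧ ‖μ‖ = x}.Nonempty := by
  have hdeg : ((A.map Complex.ofReal).charpoly).degree ≠ 0 := by
    rw [Matrix.charpoly_degree_eq_dim, Fintype.card_fin]
    exact_mod_cast Nat.succ_ne_zero n
  obtain ⟨μ, hμ⟩ := IsAlgClosed.exists_root _ hdeg
  exact ⟨‖μ‖, μ, hμ, rfl⟩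

lemma aux_pow_le_prod {ε : ℝ} (hε : 0 ≤ ε) :
    ∀ s : Multiset ℝ, (∀ x ∈ s, ε ≤ x) → ε ^ Multiset.card s ≤ s.prod := by
  intro s
  induction s using Multiset.induction with
  | empty => simp
  | cons a s ih =>
      intro h
      rw [Multiset.prod_cons, Multiset.card_cons, pow_succ, mul_comm]
      have ha : ε ≤ a := h a (Multiset.mem_cons_self a s)
      exact mul_le_mul ha (ih fun x hx => h x (Multiset.mem_cons_of_mem hx))
        (pow_nonneg hε _) (le_trans hε ha)

lemma exists_root_large {A : Matrix (Fin (n+1)) (Fin (n+1)) ℝ} {T ε : ℝ}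
    (hT : 0 ≤ T) (hε : 0 < ε)
    (hev : ‖((A.map Complex.ofReal).charpoly).eval (T : ℂ)‖ < ε ^ (n+1)) :
    ∃ μ : ℂ, ((A.map Complex.ofReal).charpoly).IsRoot μ ∧ T - ε < ‖μ‖ := by
  by_contra hcon
  push_neg at hcon
  set p := (A.map Complex.ofReal).charpoly with hp
  have hmono : p.Monic := Matrix.charpoly_monic _
  have hsplit : p.Splits := IsAlgClosed.splits p
  have hcard : Multiset.card p.roots = n + 1 := by
    rw [Polynomial.splits_iff_card_roots.1 hsplit, hp, Matrix.charpoly_natDegree_eq_dim,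
      Fintype.card_fin]
  have hfact := hsplit.eq_prod_roots_of_monic hmono
  have heval : p.eval (T : ℂ) = (p.roots.map fun a => (T : ℂ) - a).prod := by
    conv_lhs => rw [hfact]
    rw [Polynomial.eval_multiset_prod, Multiset.map_map]
    congr 1
    apply Multiset.map_congr rfl
    intro a _
    simp
  have habs : ‖p.eval (T : ℂ)‖
      = ((p.roots.map fun a => (T : ℂ) - a).map (‖·‖)).prod := by
    rw [heval]; exact map_multiset_prod (normHom (α := ℂ)) _
  have hbound : ε ^ (n+1) ≤ ‖p.eval (T : ℂ)‖ := by
    rw [habs, Multiset.map_map]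
    have hcard2 : Multiset.card (p.roots.map fun a => ‖(T : ℂ) - a‖) = n + 1 := by
      rw [Multiset.card_map, hcard]
    have := aux_pow_le_prod (le_of_lt hε)
      (p.roots.map fun a => ‖(T : ℂ) - a‖) ?_
    · rw [hcard2] at this
      convert this using 2
      rfl
    · intro x hx
      obtain ⟨a, ha, rfl⟩ := Multiset.mem_map.1 hx
      have haroot : p.IsRoot a := Polynomial.isRoot_of_mem_roots ha
      have h1 : ‖a‖ ≤ T - ε := hcon a haroot
      have h2 : ‖(T : ℂ)‖ - ‖a‖ ≤ ‖(T : ℂ) - a‖ :=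
        norm_sub_norm_le _ _
      have h3 : ‖(T : ℂ)‖ = T := by rw [Complex.norm_real, Real.norm_eq_abs, abs_of_nonneg hT]
      linarith
  linarith


/-! ### Determinant and adjugate algebra -/

lemma det_updateRow_zero_eq (B : Matrix (Fin (n+1)) (Fin (n+1)) ℝ) (γ : Fin (n+1) → ℝ) :
    (B.updateRow 0 γ).det = ∑ j, γ j * adjugate B j 0 := by
  rw [Matrix.det_succ_row_zero]
  apply Finset.sum_congr rfl
  intro j _
  have hentry : (B.updateRow 0 γ) 0 j = γ j := by rw [Matrix.updateRow_self]
  have hsub : (B.updateRow 0 γ).submatrix Fin.succ j.succAbove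
      = B.submatrix Fin.succ j.succAbove := by
    ext a b
    simp [Matrix.submatrix_apply, Matrix.updateRow_ne (Fin.succ_ne_zero a)]
  rw [hentry, hsub]
  have hadj : adjugate B j 0
      = (-1 : ℝ) ^ (((0 : Fin (n+1)) : ℕ) + (j : ℕ))
        * (B.submatrix ((0 : Fin (n+1)).succAbove) j.succAbove).det :=
    Matrix.adjugate_fin_succ_eq_det_submatrix B j 0
  rw [hadj]
  simp only [Fin.succAbove_zero, Fin.val_zero, zero_add]
  ring

lemma det_eps_factor (hcol : ∀ j, ∑ i, L i j = 0) (γ : Fin (n+1) → ℝ) (ε : ℝ) :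
    (ε • Matrix.diagonal γ - L).det
      = ε * ((ε • Matrix.diagonal γ - L).updateRow 0 γ).det := by
  set Mm := ε • Matrix.diagonal γ - L with hMm
  have hsum : (∑ k, (1:ℝ) • Mm k) = ε • γ := by
    funext j
    simp only [Finset.sum_apply, one_smul, Pi.smul_apply, smul_eq_mul]
    erw [Finset.sum_apply]
    have h1 : ∀ k, Mm k j = ε * Matrix.diagonal γ k j - L k j := fun k => by
      rw [hMm]; simp [Matrix.sub_apply, Matrix.smul_apply, smul_eq_mul]
    rw [Finset.sum_congr rfl fun k _ => h1 k, Finset.sum_sub_distrib, hcol j, sub_zero,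
      ← Finset.mul_sum]
    congr 1
    simp [Matrix.diagonal_apply, Finset.sum_ite_eq']
  have h1 := Matrix.det_updateRow_sum Mm 0 (fun _ => (1:ℝ))
  rw [hsum, Matrix.det_updateRow_smul] at h1
  simpa using h1.symm

lemma inv_formula (hcol : ∀ j, ∑ i, L i j = 0) (β γ : Fin (n+1) → ℝ) {d : ℝ} (hd : d ≠ 0) :
    Matrix.diagonal β * (Matrix.diagonal γ - d • L)⁻¹
      = (((d⁻¹ • Matrix.diagonal γ - L).updateRow 0 γ).det)⁻¹ •
        (Matrix.diagonal β * adjugate (d⁻¹ • Matrix.diagonal γ - L)) := by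
  set N := d⁻¹ • Matrix.diagonal γ - L with hN
  set h : ℝ := ((d⁻¹ • Matrix.diagonal γ - L).updateRow 0 γ).det with hh
  have hDN : Matrix.diagonal γ - d • L = d • N := by
    rw [hN, smul_sub, smul_smul, mul_inv_cancel₀ hd, one_smul]
  have hdn : (d : ℝ) ^ n ≠ 0 := pow_ne_zero _ hd
  have hdet : (d • N).det = d ^ n * h := by
    rw [Matrix.det_smul, hN, det_eps_factor hcol, ← hh, Fintype.card_fin, pow_succ]
    field_simp
  have hadj : adjugate (d • N) = d ^ n • adjugate N := by
    rw [Matrix.adjugate_smul]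
    congr 1
    simp [Fintype.card_fin]
  rw [hDN, Matrix.inv_def, hdet, hadj, Ring.inverse_eq_inv']
  rw [smul_smul]
  have : (d ^ n * h)⁻¹ * d ^ n = h⁻¹ := by
    rw [mul_inv]
    field_simp
  rw [this, Matrix.mul_smul]

lemma K_eq (hess : ∀ i j, i ≠ j → 0 ≤ L i j) (hirr : IsIrreducibleMatrix L)
    (hcol : ∀ j, ∑ i, L i j = 0) (γ : Fin (n+1) → ℝ) :
    ((-L).updateRow 0 γ).det = (-1:ℝ)^n * ∑ j, γ j * adjugate L j j := by
  rw [det_updateRow_zero_eq, Finset.mul_sum]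
  apply Finset.sum_congr rfl
  intro j _
  have h1 : (-L) = (-1 : ℝ) • L := by simp
  rw [h1, Matrix.adjugate_smul]
  have h2 : ((-1:ℝ) ^ (Fintype.card (Fin (n+1)) - 1) • adjugate L) j 0
      = (-1:ℝ)^n * adjugate L j 0 := by
    simp [Fintype.card_fin]
  rw [h2, adj_row_const hess hirr hcol j 0 j]
  ring

lemma adj_neg_entry (hess : ∀ i j, i ≠ j → 0 ≤ L i j) (hirr : IsIrreducibleMatrix L)
    (hcol : ∀ j, ∑ i, L i j = 0) (i j : Fin (n+1)) :
    adjugate (-L) i j = (-1:ℝ)^n * adjugate L i i := by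
  have h1 : (-L) = (-1 : ℝ) • L := by simp
  rw [h1, Matrix.adjugate_smul]
  have h2 : ((-1:ℝ) ^ (Fintype.card (Fin (n+1)) - 1) • adjugate L) i j
      = (-1:ℝ)^n * adjugate L i j := by
    simp [Fintype.card_fin]
  rw [h2, adj_row_const hess hirr hcol i j i]

lemma Mlim_entry (hess : ∀ i j, i ≠ j → 0 ≤ L i j) (hirr : IsIrreducibleMatrix L)
    (hcol : ∀ j, ∑ i, L i j = 0) (β γ : Fin (n+1) → ℝ)
    (i j : Fin (n+1)) :
    ((((-L).updateRow 0 γ).det)⁻¹ • (Matrix.diagonal β * adjugate (-L))) i j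
      = β i * adjugate L i i / (∑ k, γ k * adjugate L k k) := by
  have hKe := K_eq hess hirr hcol γ
  have hmul : (Matrix.diagonal β * adjugate (-L)) i j = β i * adjugate (-L) i j :=
    Matrix.diagonal_mul β (adjugate (-L)) i j
  have : ((((-L).updateRow 0 γ).det)⁻¹ • (Matrix.diagonal β * adjugate (-L))) i j
      = (((-L).updateRow 0 γ).det)⁻¹ * (β i * adjugate (-L) i j) := by
    rw [Matrix.smul_apply, hmul, smul_eq_mul]
  rw [this, hKe, adj_neg_entry hess hirr hcol]
  rcases Nat.even_or_odd n with h | h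
  · rw [Even.neg_one_pow h]
    ring
  · rw [Odd.neg_one_pow h]
    ring


lemma matrix_tendsto (hcol : ∀ j, ∑ i, L i j = 0) (β γ : Fin (n+1) → ℝ)
    (hK : ((-L).updateRow 0 γ).det ≠ 0) :
    Filter.Tendsto (fun d : ℝ => Matrix.diagonal β * (Matrix.diagonal γ - d • L)⁻¹) Filter.atTop
      (nhds ((((-L).updateRow 0 γ).det)⁻¹ • (Matrix.diagonal β * adjugate (-L)))) := by
  have h0L : (0:ℝ) • Matrix.diagonal γ - L = -L := by rw [zero_smul, zero_sub]
  set G : ℝ → Matrix (Fin (n+1)) (Fin (n+1)) ℝ := fun ε =>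
    (((ε • Matrix.diagonal γ - L).updateRow 0 γ).det)⁻¹ •
      (Matrix.diagonal β * adjugate (ε • Matrix.diagonal γ - L)) with hG
  have hcont1 : Continuous fun ε : ℝ => ε • Matrix.diagonal γ - L :=
    (continuous_id.smul continuous_const).sub continuous_const
  have hconth : Continuous fun ε : ℝ => ((ε • Matrix.diagonal γ - L).updateRow 0 γ).det :=
    (hcont1.matrix_updateRow 0 continuous_const).matrix_det
  have hK0 : (((0:ℝ) • Matrix.diagonal γ - L).updateRow 0 γ).det ≠ 0 := by rw [h0L]; exact hK
  have hGc : ContinuousAt G 0 := by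
    apply ContinuousAt.fun_smul
    · exact (hconth.continuousAt).inv₀ hK0
    · exact (continuous_const.matrix_mul hcont1.matrix_adjugate).continuousAt
  have htends : Filter.Tendsto (fun d : ℝ => G d⁻¹) Filter.atTop (nhds (G 0)) :=
    (hGc.tendsto).comp tendsto_inv_atTop_zero
  have hG0 : G 0 = (((-L).updateRow 0 γ).det)⁻¹ • (Matrix.diagonal β * adjugate (-L)) := by
    simp only [hG]
    rw [h0L]
  rw [← hG0]
  apply htends.congr'
  filter_upwards [Filter.eventually_ge_atTop (1:ℝ)] with d hd
  have hdne : d ≠ 0 := by linarith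
  simp only [hG]
  exact (inv_formula hcol β γ hdne).symm


end Aux


/-- For an essentially nonnegative, irreducible `L` with zero column sums,
`R0(d) = ρ(F·V(d)⁻¹)` converges as `d → ∞` to `(Σ β_i·C_{ii})/(Σ γ_i·C_{ii})`. -/
theorem R0_tendsto_atTop {n : ℕ} (hn : 1 ≤ n)
    (L : Matrix (Fin (n+1)) (Fin (n+1)) ℝ)
    (hess : ∀ i j, i ≠ j → 0 ≤ L i j)
    (hirr : IsIrreducibleMatrix L)
    (hcol : ∀ j, ∑ i, L i j = 0)
    (β γ : Fin (n+1) → ℝ) (hβ : ∀ i, 0 < β i) (hγ : ∀ i, 0 < γ i) :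
    Filter.Tendsto
      (fun d : ℝ => specRad (Matrix.diagonal β * (Matrix.diagonal γ - d • L)⁻¹))
      Filter.atTop
      (nhds ((∑ i, β i * cofactor L i i) / (∑ i, γ i * cofactor L i i))) := by
  classical
  have hcof : ∀ i : Fin (n+1), cofactor L i i = adjugate L i i := by
    intro i
    show (-1 : ℝ) ^ ((i : ℕ) + (i : ℕ)) * (L.submatrix i.succAbove i.succAbove).det
      = adjugate L i i
    rw [Matrix.adjugate_fin_succ_eq_det_submatrix L i i]
  set u : Fin (n+1) → ℝ := fun i => adjugate L i i with hu
  have huk : ∀ k, adjugate L k k = u k := fun k => rfl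
  set c : ℝ := ∑ k, γ k * u k with hc
  set bb : ℝ := ∑ k, β k * u k with hbb
  have hsign := u_sign hess hirr hcol
  have hu0ne : u 0 ≠ 0 := u_zero_ne hess hirr hcol
  have hdivpos : ∀ i, 0 < β i * u i / c := by
    rcases hsign with h | h
    · have hcpos : 0 < c :=
        Finset.sum_pos (fun k _ => mul_pos (hγ k) (h k)) Finset.univ_nonempty
      exact fun i => div_pos (mul_pos (hβ i) (h i)) hcpos
    · have hcneg : c < 0 :=
        Finset.sum_neg (fun k _ => mul_neg_of_pos_of_neg (hγ k) (h k)) Finset.univ_nonempty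
      exact fun i => div_pos_iff.2 (Or.inr ⟨mul_neg_of_pos_of_neg (hβ i) (h i), hcneg⟩)
  have hcne : c ≠ 0 := by
    intro h
    have := hdivpos 0
    rw [h, div_zero] at this
    exact lt_irrefl 0 this
  set T : ℝ := bb / c with hT
  have hTsum : ∑ i, β i * u i / c = T := by rw [hT, hbb, Finset.sum_div]
  have hTpos : 0 < T := by
    rw [← hTsum]
    exact Finset.sum_pos (fun i _ => hdivpos i) Finset.univ_nonempty
  have htarget : (∑ i, β i * cofactor L i i) / (∑ i, γ i * cofactor L i i) = T := by
    rw [hT, hbb, hc]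
    congr 1 <;> exact Finset.sum_congr rfl fun i _ => by rw [hcof i, huk i]
  rw [htarget]
  have hKval : ((-L).updateRow 0 γ).det = (-1:ℝ)^n * c := by
    rw [K_eq hess hirr hcol γ, hc]
  have hKne : ((-L).updateRow 0 γ).det ≠ 0 := by
    rw [hKval]
    exact mul_ne_zero (pow_ne_zero _ (by norm_num)) hcne
  set Mlim : Matrix (Fin (n+1)) (Fin (n+1)) ℝ :=
    (((-L).updateRow 0 γ).det)⁻¹ • (Matrix.diagonal β * adjugate (-L)) with hMl
  have hMd : Filter.Tendsto (fun d : ℝ => Matrix.diagonal β * (Matrix.diagonal γ - d • L)⁻¹)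
      Filter.atTop (nhds Mlim) := matrix_tendsto hcol β γ hKne
  have hentry : ∀ i j, Mlim i j = β i * u i / c := fun i j =>
    Mlim_entry hess hirr hcol β γ i j
  have hwroot : (T • (1 : Matrix (Fin (n+1)) (Fin (n+1)) ℝ) - Mlim).det = 0 := by
    rw [← Matrix.exists_mulVec_eq_zero_iff]
    refine ⟨fun i => β i * u i, ?_, ?_⟩
    · intro hzero
      have := congrFun hzero 0
      simp only [Pi.zero_apply] at this
      rcases mul_eq_zero.1 this with h | h
      · exact (hβ 0).ne' h
      · exact hu0ne h
    · rw [Matrix.sub_mulVec, Matrix.smul_mulVec, Matrix.one_mulVec, sub_eq_zero]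
      funext i
      show T * (β i * u i) = ∑ j, Mlim i j * (β j * u j)
      rw [Finset.sum_congr rfl (fun j _ => by rw [hentry i j]), ← Finset.mul_sum, ← hbb, hT]
      ring
  have hdetC : ((T : ℂ) • (1 : Matrix (Fin (n+1)) (Fin (n+1)) ℂ) - Mlim.map Complex.ofReal).det
      = 0 := by
    have hmapeq : ((T • (1 : Matrix (Fin (n+1)) (Fin (n+1)) ℝ) - Mlim).map Complex.ofReal)
        = (T : ℂ) • 1 - Mlim.map Complex.ofReal := by
      ext i j
      simp [Matrix.map_apply, Matrix.sub_apply, Matrix.smul_apply, Matrix.one_apply,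
        apply_ite Complex.ofReal]
    calc ((T : ℂ) • (1 : Matrix (Fin (n+1)) (Fin (n+1)) ℂ) - Mlim.map Complex.ofReal).det
        = ((T • (1 : Matrix (Fin (n+1)) (Fin (n+1)) ℝ) - Mlim).map
            (⇑Complex.ofRealHom)).det := by rw [← hmapeq]; rfl
      _ = Complex.ofRealHom ((T • (1 : Matrix (Fin (n+1)) (Fin (n+1)) ℝ) - Mlim).det) := by
          rw [← RingHom.mapMatrix_apply, RingHom.map_det]
      _ = 0 := by rw [hwroot]; simp
  have hφcont : Continuous fun M : Matrix (Fin (n+1)) (Fin (n+1)) ℝ =>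
      ((T:ℂ) • (1 : Matrix (Fin (n+1)) (Fin (n+1)) ℂ) - M.map Complex.ofReal).det :=
    (continuous_const.sub (continuous_id.matrix_map Complex.continuous_ofReal)).matrix_det
  have hφtend : Filter.Tendsto
      (fun d : ℝ => ((T:ℂ) • (1 : Matrix (Fin (n+1)) (Fin (n+1)) ℂ)
        - ((Matrix.diagonal β * (Matrix.diagonal γ - d • L)⁻¹).map Complex.ofReal)).det)
      Filter.atTop (nhds 0) := by
    have := (hφcont.tendsto Mlim).comp hMd
    rwa [hdetC] at this
  have hentrytend : ∀ i j, Filter.Tendsto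
      (fun d : ℝ => (Matrix.diagonal β * (Matrix.diagonal γ - d • L)⁻¹) i j)
      Filter.atTop (nhds (β i * u i / c)) := by
    intro i j
    have := ((continuous_id.matrix_elem i j).tendsto Mlim).comp hMd
    simp only [id_eq] at this
    rwa [hentry i j] at this
  have hcolsumtend : ∀ j, Filter.Tendsto
      (fun d : ℝ => ∑ i, |(Matrix.diagonal β * (Matrix.diagonal γ - d • L)⁻¹) i j|)
      Filter.atTop (nhds T) := by
    intro j
    have h1 := tendsto_finset_sum Finset.univ (fun i (_ : i ∈ Finset.univ) =>
      (hentrytend i j).abs)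
    have h2 : ∑ i, |β i * u i / c| = T := by
      rw [← hTsum]
      exact Finset.sum_congr rfl fun i _ => abs_of_pos (hdivpos i)
    rwa [h2] at h1
  rw [Metric.tendsto_nhds]
  intro ε hε
  set ε' : ℝ := min (ε/2) T with hε'def
  have hε'pos : 0 < ε' := lt_min (by linarith) hTpos
  have hε'le : ε' ≤ ε/2 := min_le_left _ _
  have hev1 : ∀ᶠ d : ℝ in Filter.atTop, ∀ j,
      ∑ i, |(Matrix.diagonal β * (Matrix.diagonal γ - d • L)⁻¹) i j| < T + ε' :=
    Filter.eventually_all.2 fun j => (hcolsumtend j).eventually_lt_const (by linarith)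
  have hev2 : ∀ᶠ d : ℝ in Filter.atTop,
      ‖((T:ℂ) • (1 : Matrix (Fin (n+1)) (Fin (n+1)) ℂ)
        - ((Matrix.diagonal β * (Matrix.diagonal γ - d • L)⁻¹).map Complex.ofReal)).det‖
        < ε' ^ (n+1) := by
    have habs := (continuous_norm.tendsto 0).comp hφtend
    simp only [norm_zero] at habs
    exact habs.eventually_lt_const (pow_pos hε'pos _)
  filter_upwards [hev1, hev2] with d hd1 hd2
  have hev3 : ‖(((Matrix.diagonal β * (Matrix.diagonal γ - d • L)⁻¹).map
      Complex.ofReal).charpoly).eval (T : ℂ)‖ < ε' ^ (n+1) := by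
    rw [my_charpoly_eval]
    exact hd2
  obtain ⟨μ, hroot, hgt⟩ := exists_root_large (le_of_lt hTpos) hε'pos hev3
  have hup : ∀ x ∈ {x : ℝ | ∃ μ : ℂ,
      (((Matrix.diagonal β * (Matrix.diagonal γ - d • L)⁻¹).map Complex.ofReal).charpoly).IsRoot μ
      ∧ ‖μ‖ = x}, x ≤ T + ε' := by
    rintro x ⟨ν, hν, rfl⟩
    exact root_abs_le (fun j => le_of_lt (hd1 j)) hν
  have hne := specSet_nonempty (Matrix.diagonal β * (Matrix.diagonal γ - d • L)⁻¹)
  have hbdd : BddAbove {x : ℝ | ∃ μ : ℂ,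
      (((Matrix.diagonal β * (Matrix.diagonal γ - d • L)⁻¹).map Complex.ofReal).charpoly).IsRoot μ
      ∧ ‖μ‖ = x} := ⟨T + ε', hup⟩
  have hub : specRad (Matrix.diagonal β * (Matrix.diagonal γ - d • L)⁻¹) ≤ T + ε' :=
    csSup_le hne hup
  have hlow : T - ε' < specRad (Matrix.diagonal β * (Matrix.diagonal γ - d • L)⁻¹) :=
    lt_of_lt_of_le hgt (le_csSup hbdd ⟨μ, hroot, rfl⟩)
  rw [Real.dist_eq, abs_lt]
  constructor <;> [linarith [hlow]; linarith [hub]]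
end
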